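/- arXiv:math/9904165 — 5 statements merged into one kernel-verified Lean document; each statement's English description precedes it below -/
import Mathlib

section
/- Let X be an n-dimensional Banach lattice on ℝⁿ with 2-concavity constant M_(2)(X) = 1, and let λ ∈ ℝⁿ. Then the operator norm of the diagonal operator D_λ : ℓ₂ⁿ → X (given coordinatewise by (D_λ x)_k = λ_k x_k) equals ‖λ‖_{(((X')²)')^{1/2}}, i.e. ‖D_λ‖ = ‖ |λ|² ‖_{((X')²)'}^{1/2}, where X' is the dual lattice, Y² denotes the 2nd power of a lattice Y (‖y‖_{Y²} = ‖|y|^{1/2}‖_Y²), and Z^{1/2} denotes the 1/2-power (‖z‖_{Z^{1/2}} = ‖|z|²‖_Z^{1/2}). -/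
open Complex MeasureTheory Finset

noncomputable section

namespace Paper

/-- The closed unit strip in the complex plane. -/
def Strip : Set ℂ := {z : ℂ | 0 ≤ z.re ∧ z.re ≤ 1}

/-- The open unit strip in the complex plane. -/
def OStrip : Set ℂ := {z : ℂ | 0 < z.re ∧ z.re < 1}

/-- `N` is a norm on the complex vector space `V`. -/
def IsNormC {V : Type*} [AddCommGroup V] [Module ℂ V] (N : V → ℝ) : Prop :=
  (∀ x, 0 ≤ N x) ∧ (∀ x, N x = 0 → x = 0) ∧
  (∀ (c : ℂ) (x), N (c • x) = ‖c‖ * N x) ∧ (∀ x y, N (x + y) ≤ N x + N y)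

/-- `N` is a lattice norm on `ℝⁿ`. -/
def IsLatticeNorm {n : ℕ} (N : (Fin n → ℝ) → ℝ) : Prop :=
  (∀ x, 0 ≤ N x) ∧ (∀ x, N x = 0 → x = 0) ∧
  (∀ (c : ℝ) (x), N (c • x) = |c| * N x) ∧ (∀ x y, N (x + y) ≤ N x + N y) ∧
  (∀ x y, (∀ i, |x i| ≤ |y i|) → N x ≤ N y)

/-- The `r`-th power `X^r` of a lattice norm: `‖x‖_{X^r} = ‖ |x|^{1/r} ‖_X^r`. -/
def powNorm {n : ℕ} (r : ℝ) (N : (Fin n → ℝ) → ℝ) (x : Fin n → ℝ) : ℝ :=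
  (N fun i => |x i| ^ (1 / r)) ^ r

/-- `N` is `p`-convex with constant `C`. -/
def ConvexWith {n : ℕ} (p C : ℝ) (N : (Fin n → ℝ) → ℝ) : Prop :=
  ∀ (m : ℕ) (x : Fin m → Fin n → ℝ),
    N (fun j => (∑ i, |x i j| ^ p) ^ (1 / p)) ≤ C * (∑ i, N (x i) ^ p) ^ (1 / p)

/-- `N` is `p`-concave with constant `C`. -/
def ConcaveWith {n : ℕ} (p C : ℝ) (N : (Fin n → ℝ) → ℝ) : Prop :=
  ∀ (m : ℕ) (x : Fin m → Fin n → ℝ),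
    (∑ i, N (x i) ^ p) ^ (1 / p) ≤ C * N (fun j => (∑ i, |x i j| ^ p) ^ (1 / p))

/-- The dual lattice norm on `ℝⁿ`. -/
def dualNR {n : ℕ} (N : (Fin n → ℝ) → ℝ) (y : Fin n → ℝ) : ℝ :=
  sSup {r : ℝ | ∃ x, N x ≤ 1 ∧ r = |∑ i, x i * y i|}

/-- The Calderón product norm `X₀^{1-θ}X₁^θ` on `ℝⁿ`. -/
def calNorm {n : ℕ} (θ : ℝ) (N₀ N₁ : (Fin n → ℝ) → ℝ) (f : Fin n → ℝ) : ℝ :=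
  sInf {c : ℝ | ∃ g h : Fin n → ℝ, (∀ i, |f i| = |g i| ^ (1 - θ) * |h i| ^ θ) ∧
    c = N₀ g ^ (1 - θ) * N₁ h ^ θ}

/-- The complex interpolation norm `[N₀,N₁]_θ`, computed via analytic functions
of finite type `z ↦ ∑ φᵢ(z) • vᵢ` on the strip (which, by density, gives the
complex interpolation norm on the intersection for couples with dense intersection). -/
def interpN {D : Type*} [AddCommGroup D] [Module ℂ D]
    (θ : ℝ) (N₀ N₁ : D → ℝ) (x : D) : ℝ :=
  sInf {c : ℝ | ∃ (m : ℕ) (φ : Fin m → ℂ → ℂ) (v : Fin m → D),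
    (∀ i, ContinuousOn (φ i) Strip) ∧
    (∀ i, DifferentiableOn ℂ (φ i) OStrip) ∧
    (∀ i, ∃ B : ℝ, ∀ z ∈ Strip, ‖φ i z‖ ≤ B) ∧
    (∑ i, φ i (θ : ℂ) • v i) = x ∧
    (∀ t : ℝ, N₀ (∑ i, φ i (Complex.I * t) • v i) ≤ c) ∧
    (∀ t : ℝ, N₁ (∑ i, φ i (1 + Complex.I * t) • v i) ≤ c)}

/-- Operator "norm" of a map with respect to given norm functions. -/
def opN {X Y : Type*} (NX : X → ℝ) (NY : Y → ℝ) (T : X → Y) : ℝ :=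
  sSup {r : ℝ | ∃ x, NX x ≤ 1 ∧ r = NY (T x)}

/-- The Hilbert space `ℓ₂`. -/
abbrev Hilb := lp (fun _ : ℕ => ℂ) 2

def hilbNorm (x : Hilb) : ℝ := ‖x‖

/-- `d_θ[M₀,M₁]`: the norm of the identity
`L(ℓ₂,[M₀,M₁]_θ) → [L(ℓ₂,M₀),L(ℓ₂,M₁)]_θ`. -/
def dTheta {V : Type*} [NormedAddCommGroup V] [NormedSpace ℂ V]
    (θ : ℝ) (N₀ N₁ : V → ℝ) : ℝ :=
  sSup {r : ℝ | ∃ T : Hilb →L[ℂ] V,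
    opN hilbNorm (interpN θ N₀ N₁) ⇑T ≤ 1 ∧
    r = interpN θ (fun S : Hilb →L[ℂ] V => opN hilbNorm N₀ ⇑S)
        (fun S : Hilb →L[ℂ] V => opN hilbNorm N₁ ⇑S) T}

/-- Rademacher average `(2^{-m} ∑_ε ‖∑ ±xᵢ‖²)`. -/
def radAvg {V : Type*} [AddCommGroup V] (N : V → ℝ) {m : ℕ} (x : Fin m → V) : ℝ :=
  ((2 : ℝ) ^ m)⁻¹ * ∑ ε : Fin m → Bool, N (∑ i, if ε i then x i else -x i) ^ 2

/-- `N` has (Rademacher) type 2 with constant `C`. -/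
def Type2With {V : Type*} [AddCommGroup V] (N : V → ℝ) (C : ℝ) : Prop :=
  ∀ (m : ℕ) (x : Fin m → V), Real.sqrt (radAvg N x) ≤ C * Real.sqrt (∑ i, N (x i) ^ 2)

/-- `N` has (Rademacher) cotype 2 with constant `C`. -/
def Cotype2With {V : Type*} [AddCommGroup V] (N : V → ℝ) (C : ℝ) : Prop :=
  ∀ (m : ℕ) (x : Fin m → V), Real.sqrt (∑ i, N (x i) ^ 2) ≤ C * Real.sqrt (radAvg N x)

/-- The injective tensor norm of two norm functions. -/
def injN {V W : Type*} [AddCommGroup V] [Module ℂ V] [AddCommGroup W] [Module ℂ W]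
    (NV : V → ℝ) (NW : W → ℝ) (z : TensorProduct ℂ V W) : ℝ :=
  sSup {r : ℝ | ∃ (φ : V →ₗ[ℂ] ℂ) (ψ : W →ₗ[ℂ] ℂ),
    (∀ x, ‖φ x‖ ≤ NV x) ∧ (∀ y, ‖ψ y‖ ≤ NW y) ∧
    r = ‖TensorProduct.lift (((LinearMap.mul ℂ ℂ).comp φ).compl₂ ψ) z‖}

/-- Dual norm on linear functionals. -/
def dualNC {V : Type*} [AddCommGroup V] [Module ℂ V] (N : V → ℝ) (φ : V →ₗ[ℂ] ℂ) : ℝ :=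
  sSup {r : ℝ | ∃ x, N x ≤ 1 ∧ r = ‖φ x‖}

/-- The space of bounded linear functionals (dual space of the completion). -/
def BddDual {V : Type*} [AddCommGroup V] [Module ℂ V] (N : V → ℝ) :
    Submodule ℂ (V →ₗ[ℂ] ℂ) where
  carrier := {φ | ∃ c : ℝ, ∀ x, ‖φ x‖ ≤ c * N x}
  zero_mem' := ⟨0, by simp⟩
  add_mem' := by
    rintro φ ψ ⟨c, hc⟩ ⟨d, hd⟩
    exact ⟨c + d, fun x => by
      have h1 := hc x; have h2 := hd x
      calc ‖(φ + ψ) x‖ = ‖φ x + ψ x‖ := by simp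
        _ ≤ ‖φ x‖ + ‖ψ x‖ := norm_add_le _ _
        _ ≤ (c + d) * N x := by rw [add_mul]; exact add_le_add h1 h2⟩
  smul_mem' := by
    rintro a φ ⟨c, hc⟩
    exact ⟨‖a‖ * c, fun x => by
      have : ‖(a • φ) x‖ = ‖a‖ * ‖φ x‖ := by simp [norm_smul]
      rw [this, mul_assoc]
      exact mul_le_mul_of_nonneg_left (hc x) (norm_nonneg a)⟩

/-- Strictly simple functions with values in `V`: the span of
`v`-valued indicators of finite-measure measurable sets. -/
def SimpleSub {Ω : Type*} [MeasurableSpace Ω] (μ : Measure Ω)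
    (V : Type*) [AddCommGroup V] [Module ℂ V] : Submodule ℂ (Ω → V) :=
  Submodule.span ℂ {f | ∃ (s : Set Ω) (v : V), MeasurableSet s ∧ μ s < ⊤ ∧
    f = s.indicator fun _ => v}

/-- A Banach function space over a measure `μ`, with `K`-valued functions. -/
structure BFS (Ω : Type*) [MeasurableSpace Ω] (μ : Measure Ω) (K : Type*) [RCLike K] where
  mem : (Ω → K) → Prop
  nrm : (Ω → K) → ℝ
  mem_zero : mem 0
  mem_add : ∀ f g, mem f → mem g → mem (f + g)
  mem_smul : ∀ (c : K) (f), mem f → mem (c • f)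
  mem_meas : ∀ f, mem f → AEStronglyMeasurable f μ
  ideal : ∀ f g, AEStronglyMeasurable f μ → mem g →
    (∀ᵐ ω ∂μ, ‖f ω‖ ≤ ‖g ω‖) → mem f ∧ nrm f ≤ nrm g
  nrm_nonneg : ∀ f, 0 ≤ nrm f
  nrm_eq_zero : ∀ f, mem f → nrm f = 0 → f =ᵐ[μ] 0
  nrm_add : ∀ f g, mem f → mem g → nrm (f + g) ≤ nrm f + nrm g
  nrm_smul : ∀ (c : K) (f), nrm (c • f) = ‖c‖ * nrm f
  mem_indicator : ∀ s : Set Ω, MeasurableSet s → μ s < ⊤ →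
    mem (s.indicator fun _ => 1)
  complete : ∀ f : ℕ → Ω → K, (∀ k, mem (f k)) →
    (∀ ε : ℝ, 0 < ε → ∃ N : ℕ, ∀ p q, N ≤ p → N ≤ q → nrm (f p - f q) < ε) →
    ∃ g, mem g ∧ ∀ ε : ℝ, 0 < ε → ∃ N : ℕ, ∀ p, N ≤ p → nrm (f p - g) < ε

variable {Ω : Type*} [MeasurableSpace Ω] {μ : Measure Ω} {K : Type*} [RCLike K]

/-- `X` is `r`-convex with constant `C`. -/
def BFS.RConvexWith (X : BFS Ω μ K) (r C : ℝ) : Prop :=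
  ∀ (m : ℕ) (f : Fin m → Ω → K), (∀ i, X.mem (f i)) →
    X.mem (fun ω => ((((∑ i, ‖f i ω‖ ^ r) ^ (1 / r) : ℝ) : K))) ∧
    X.nrm (fun ω => ((((∑ i, ‖f i ω‖ ^ r) ^ (1 / r) : ℝ) : K))) ≤
      C * (∑ i, X.nrm (f i) ^ r) ^ (1 / r)

/-- `X` is `r`-concave with constant `C`. -/
def BFS.RConcaveWith (X : BFS Ω μ K) (r C : ℝ) : Prop :=
  ∀ (m : ℕ) (f : Fin m → Ω → K), (∀ i, X.mem (f i)) →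
    (∑ i, X.nrm (f i) ^ r) ^ (1 / r) ≤
      C * X.nrm (fun ω => ((((∑ i, ‖f i ω‖ ^ r) ^ (1 / r) : ℝ) : K)))

section Aux

variable {n : ℕ} {N : (Fin n → ℝ) → ℝ}

lemma lat_zero (hN : IsLatticeNorm N) : N 0 = 0 := by
  have h := hN.2.2.1 0 (0 : Fin n → ℝ)
  simpa using h

lemma lat_single_pos (hN : IsLatticeNorm N) (i : Fin n) : 0 < N (Pi.single i 1) := by
  rcases (hN.1 (Pi.single i 1)).lt_or_eq with h | h
  · exact h
  · exfalso
    have h2 := hN.2.1 _ h.symm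
    have h3 := congrFun h2 i
    simp at h3

lemma single_smul_one (i : Fin n) (c : ℝ) :
    Pi.single i c = c • (Pi.single i 1 : Fin n → ℝ) := by
  funext j
  rcases eq_or_ne j i with h | h
  · subst h; simp
  · simp [Pi.single_eq_of_ne h]

lemma lat_coord (hN : IsLatticeNorm N) {x : Fin n → ℝ} (hx : N x ≤ 1) (i : Fin n) :
    |x i| ≤ (N (Pi.single i 1))⁻¹ := by
  have h1 : N (Pi.single i (x i)) ≤ N x := by
    apply hN.2.2.2.2
    intro j
    by_cases h : j = i
    · subst h; simp
    · simp [Pi.single_apply, h]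
  have h2 : N (Pi.single i (x i)) = |x i| * N (Pi.single i 1) := by
    rw [single_smul_one i (x i)]
    exact hN.2.2.1 (x i) (Pi.single i 1)
  rw [← one_div, le_div_iff₀ (lat_single_pos hN i)]
  calc |x i| * N (Pi.single i 1) = N (Pi.single i (x i)) := h2.symm
    _ ≤ N x := h1
    _ ≤ 1 := hx

lemma dual_bdd (hN : IsLatticeNorm N) (y : Fin n → ℝ) :
    BddAbove {r : ℝ | ∃ x, N x ≤ 1 ∧ r = |∑ i, x i * y i|} := by
  refine ⟨∑ i, (N (Pi.single i 1))⁻¹ * |y i|, ?_⟩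
  rintro r ⟨x, hx, rfl⟩
  calc |∑ i, x i * y i| ≤ ∑ i, |x i * y i| := Finset.abs_sum_le_sum_abs _ _
    _ ≤ ∑ i, (N (Pi.single i 1))⁻¹ * |y i| := by
        apply Finset.sum_le_sum
        intro i _
        rw [abs_mul]
        exact mul_le_mul_of_nonneg_right (lat_coord hN hx i) (abs_nonneg _)

lemma dual_nonneg (hN : IsLatticeNorm N) (y : Fin n → ℝ) : 0 ≤ dualNR N y := by
  apply le_csSup (dual_bdd hN y)
  exact ⟨0, by simp [lat_zero hN]⟩

lemma dual_le (hN : IsLatticeNorm N) {y : Fin n → ℝ} {c : ℝ} (hc : 0 ≤ c)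
    (h : ∀ x, N x ≤ 1 → |∑ i, x i * y i| ≤ c) : dualNR N y ≤ c := by
  apply Real.sSup_le _ hc
  rintro r ⟨x, hx, rfl⟩
  exact h x hx

lemma dual_pairing (hN : IsLatticeNorm N) (x y : Fin n → ℝ) :
    |∑ i, x i * y i| ≤ N x * dualNR N y := by
  by_cases hx : N x = 0
  · have : x = 0 := hN.2.1 x hx
    subst this
    simp [hx]
  · have hx0 : 0 < N x := lt_of_le_of_ne (hN.1 x) (Ne.symm hx)
    have hmem : |∑ i, ((N x)⁻¹ • x) i * y i| ≤ dualNR N y := by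
      apply le_csSup (dual_bdd hN y)
      refine ⟨(N x)⁻¹ • x, ?_, rfl⟩
      rw [hN.2.2.1]
      rw [abs_of_pos (inv_pos.2 hx0)]
      rw [inv_mul_cancel₀ hx]
    have heq : |∑ i, ((N x)⁻¹ • x) i * y i| = (N x)⁻¹ * |∑ i, x i * y i| := by
      have : ∑ i, ((N x)⁻¹ • x) i * y i = (N x)⁻¹ * ∑ i, x i * y i := by
        rw [Finset.mul_sum]
        exact Finset.sum_congr rfl fun i _ => by simp [mul_assoc]
      rw [this, abs_mul, abs_of_pos (inv_pos.2 hx0)]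
    rw [heq] at hmem
    calc |∑ i, x i * y i| = N x * ((N x)⁻¹ * |∑ i, x i * y i|) := by
          field_simp
      _ ≤ N x * dualNR N y := mul_le_mul_of_nonneg_left hmem (hN.1 x)

lemma bidual (hN : IsLatticeNorm N) (v : Fin n → ℝ) :
    ∃ y : Fin n → ℝ, (∀ x, |∑ i, x i * y i| ≤ N x) ∧ ∑ i, v i * y i = N v := by
  by_cases hv : v = 0
  · subst hv
    exact ⟨0, fun x => by simpa using hN.1 x, by simp [lat_zero hN]⟩
  · obtain ⟨g, hg1, hg2⟩ := exists_extension_of_le_sublinear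
      (LinearPMap.mkSpanSingleton v (N v) hv) N
      (fun c hc x => by rw [hN.2.2.1]; rw [abs_of_pos hc])
      (fun x y => hN.2.2.2.1 x y)
      (by
        rintro ⟨w, hw⟩
        obtain ⟨t, rfl⟩ := Submodule.mem_span_singleton.1 hw
        have : (LinearPMap.mkSpanSingleton v (N v) hv) ⟨t • v, hw⟩ = t • (N v) := by
          apply LinearPMap.mkSpanSingleton'_apply
        rw [this]
        have : N (t • v) = |t| * N v := hN.2.2.1 t v
        rw [this]
        simp only [smul_eq_mul]
        exact mul_le_mul_of_nonneg_right (le_abs_self t) (hN.1 v))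
    refine ⟨fun i => g (Pi.single i 1), ?_, ?_⟩
    · have key : ∀ x : Fin n → ℝ, g x = ∑ i, x i * g (Pi.single i 1) := by
        intro x
        conv_lhs => rw [← Finset.univ_sum_single x]
        rw [map_sum]
        congr 1
        funext i
        rw [single_smul_one i (x i), LinearMap.map_smul, smul_eq_mul]
      intro x
      rw [← key]
      rw [abs_le]
      constructor
      · have := hg2 (-x)
        rw [map_neg] at this
        have hxx : N (-x) = N x := by
          have h := hN.2.2.1 (-1) x
          simpa using h
        linarith
      · exact hg2 x
    · have key : g v = ∑ i, v i * g (Pi.single i 1) := by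
        conv_lhs => rw [← Finset.univ_sum_single v]
        rw [map_sum]
        congr 1
        funext i
        rw [single_smul_one i (v i), LinearMap.map_smul, smul_eq_mul]
      rw [← key]
      have : g v = (LinearPMap.mkSpanSingleton v (N v) hv)
          ⟨v, Submodule.mem_span_singleton_self v⟩ :=
        hg1 ⟨v, Submodule.mem_span_singleton_self v⟩
      rw [this, LinearPMap.mkSpanSingleton_apply]

lemma sq_rpow_half (a : ℝ) : |a ^ 2| ^ ((1:ℝ)/2) = |a| := by
  rw [_root_.abs_pow, ← Real.rpow_natCast |a| 2, ← Real.rpow_mul (abs_nonneg a)]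
  norm_num

lemma rpow_half_sq (a : ℝ) : (|a| ^ ((1:ℝ)/2)) ^ 2 = |a| := by
  rw [← Real.rpow_natCast (|a| ^ ((1:ℝ)/2)) 2, ← Real.rpow_mul (abs_nonneg a)]
  norm_num

end Aux

/-- for a 2-concave lattice norm with constant 1,
`‖D_λ : ℓ₂ⁿ → X‖ = ‖λ‖_{(((X')²)')^{1/2}} = ‖|λ|²‖_{((X')²)'}^{1/2}`. -/
theorem statement1 {n : ℕ} (N : (Fin n → ℝ) → ℝ) (hN : IsLatticeNorm N)
    (hconc : ConcaveWith 2 1 N) (lam : Fin n → ℝ) :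
    sSup {r : ℝ | ∃ x : Fin n → ℝ, Real.sqrt (∑ i, x i ^ 2) ≤ 1 ∧
        r = N (fun i => lam i * x i)} =
      Real.sqrt (dualNR (powNorm 2 (dualNR N)) fun i => lam i ^ 2) := by
  -- coordinate bounds for the unit ball of `powNorm 2 (dualNR N)`
  have hcoordP : ∀ μ : Fin n → ℝ, powNorm 2 (dualNR N) μ ≤ 1 →
      ∀ i, |μ i| ≤ (N (Pi.single i 1)) ^ 2 := by
    intro μ hμ i
    simp only [powNorm] at hμ
    set g : Fin n → ℝ := fun i => |μ i| ^ ((1:ℝ)/2) with hgdef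
    have hg0 : 0 ≤ dualNR N g := dual_nonneg hN g
    have hgN : dualNR N g ≤ 1 := by
      rw [Real.rpow_two] at hμ
      nlinarith
    have hgnn : 0 ≤ g i := Real.rpow_nonneg (abs_nonneg _) _
    have hgi : g i ≤ N (Pi.single i 1) := by
      have hp := dual_pairing hN (Pi.single i 1) g
      have hsum : ∑ j, (Pi.single i 1 : Fin n → ℝ) j * g j = g i := by
        simp [Pi.single_apply, ite_mul]
      rw [hsum] at hp
      calc g i = |g i| := (_root_.abs_of_nonneg hgnn).symm
        _ ≤ N (Pi.single i 1) * dualNR N g := hp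
        _ ≤ N (Pi.single i 1) * 1 :=
            mul_le_mul_of_nonneg_left hgN (lat_single_pos hN i).le
        _ = N (Pi.single i 1) := mul_one _
    calc |μ i| = g i ^ 2 := (rpow_half_sq (μ i)).symm
      _ ≤ (N (Pi.single i 1)) ^ 2 := pow_le_pow_left₀ hgnn hgi 2
  have hbddP : BddAbove {r : ℝ | ∃ μ : Fin n → ℝ, powNorm 2 (dualNR N) μ ≤ 1 ∧
      r = |∑ i, μ i * (fun i => lam i ^ 2) i|} := by
    refine ⟨∑ i, (N (Pi.single i 1)) ^ 2 * lam i ^ 2, ?_⟩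
    rintro r ⟨μ, hμ, rfl⟩
    calc |∑ i, μ i * lam i ^ 2| ≤ ∑ i, |μ i * lam i ^ 2| := Finset.abs_sum_le_sum_abs _ _
      _ ≤ ∑ i, (N (Pi.single i 1)) ^ 2 * lam i ^ 2 := by
          apply Finset.sum_le_sum
          intro i _
          rw [abs_mul, _root_.abs_of_nonneg (sq_nonneg (lam i))]
          exact mul_le_mul_of_nonneg_right (hcoordP μ hμ i) (sq_nonneg _)
  have hbddL : BddAbove {r : ℝ | ∃ x : Fin n → ℝ, Real.sqrt (∑ i, x i ^ 2) ≤ 1 ∧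
      r = N (fun i => lam i * x i)} := by
    refine ⟨N (fun i => |lam i|), ?_⟩
    rintro r ⟨x, hx, rfl⟩
    apply hN.2.2.2.2
    intro i
    have hS : 0 ≤ ∑ j, x j ^ 2 := Finset.sum_nonneg fun j _ => sq_nonneg _
    have hsum1 : ∑ j, x j ^ 2 ≤ 1 := by
      nlinarith [Real.sq_sqrt hS, Real.sqrt_nonneg (∑ j, x j ^ 2)]
    have h1 : x i ^ 2 ≤ ∑ j, x j ^ 2 :=
      Finset.single_le_sum (f := fun j => x j ^ 2) (fun j _ => sq_nonneg _) (Finset.mem_univ i)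
    have hxi : |x i| ≤ 1 := by
      nlinarith [abs_nonneg (x i), _root_.sq_abs (x i)]
    calc |lam i * x i| = |lam i| * |x i| := abs_mul _ _
      _ ≤ |lam i| * 1 := mul_le_mul_of_nonneg_left hxi (abs_nonneg _)
      _ = |(fun i => |lam i|) i| := by rw [mul_one]; simp
  have hL0 : 0 ≤ sSup {r : ℝ | ∃ x : Fin n → ℝ, Real.sqrt (∑ i, x i ^ 2) ≤ 1 ∧
      r = N (fun i => lam i * x i)} := by
    apply le_csSup hbddL
    refine ⟨0, by simp, ?_⟩
    have h0 : (fun i => lam i * (0 : Fin n → ℝ) i) = 0 := by funext i; simp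
    rw [h0, lat_zero hN]
  apply le_antisymm
  · -- LHS ≤ RHS
    apply Real.sSup_le _ (Real.sqrt_nonneg _)
    rintro r ⟨x, hx, rfl⟩
    obtain ⟨y, hy1, hy2⟩ := bidual hN (fun i => lam i * x i)
    have habs : dualNR N (fun i => |y i|) ≤ 1 := by
      apply dual_le hN zero_le_one
      intro z hz
      set z' : Fin n → ℝ := fun i => if y i < 0 then -z i else z i with hz'
      have hzz : N z' ≤ N z := by
        apply hN.2.2.2.2
        intro i
        by_cases h : y i < 0 <;> simp [hz', h]
      have hsum : ∑ i, z i * |y i| = ∑ i, z' i * y i := by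
        apply Finset.sum_congr rfl
        intro i _
        by_cases h : y i < 0
        · simp only [hz', if_pos h, _root_.abs_of_neg h]; ring
        · simp only [hz', if_neg h, _root_.abs_of_nonneg (not_lt.1 h)]
      rw [hsum]
      exact le_trans (hy1 z') (le_trans hzz hz)
    have hPμ : powNorm 2 (dualNR N) (fun i => y i ^ 2) ≤ 1 := by
      simp only [powNorm]
      have heq : (fun i => |(fun i => y i ^ 2) i| ^ ((1:ℝ)/2)) = fun i => |y i| := by
        funext i
        exact sq_rpow_half (y i)
      rw [heq]
      exact Real.rpow_le_one (dual_nonneg hN _) habs (by norm_num)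
    have h0 : (0:ℝ) ≤ ∑ i, y i ^ 2 * lam i ^ 2 :=
      Finset.sum_nonneg fun i _ => mul_nonneg (sq_nonneg _) (sq_nonneg _)
    have hmem : ∑ i, y i ^ 2 * lam i ^ 2 ≤ dualNR (powNorm 2 (dualNR N)) (fun i => lam i ^ 2) := by
      calc ∑ i, y i ^ 2 * lam i ^ 2 = |∑ i, y i ^ 2 * lam i ^ 2| := (_root_.abs_of_nonneg h0).symm
        _ ≤ _ := le_csSup hbddP ⟨fun i => y i ^ 2, hPμ, rfl⟩
    have hS : 0 ≤ ∑ j, x j ^ 2 := Finset.sum_nonneg fun j _ => sq_nonneg _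
    have hsum1 : ∑ j, x j ^ 2 ≤ 1 := by
      nlinarith [Real.sq_sqrt hS, Real.sqrt_nonneg (∑ j, x j ^ 2)]
    have hcs : N (fun i => lam i * x i) ^ 2 ≤ ∑ i, y i ^ 2 * lam i ^ 2 := by
      rw [← hy2]
      calc (∑ i, (lam i * x i) * y i) ^ 2 = (∑ i, x i * (lam i * y i)) ^ 2 := by
            congr 1
            exact Finset.sum_congr rfl fun i _ => by ring
        _ ≤ (∑ i, x i ^ 2) * (∑ i, (lam i * y i) ^ 2) :=
            Finset.sum_mul_sq_le_sq_mul_sq _ _ _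
        _ ≤ 1 * (∑ i, (lam i * y i) ^ 2) :=
            mul_le_mul_of_nonneg_right hsum1
              (Finset.sum_nonneg fun i _ => sq_nonneg _)
        _ = ∑ i, y i ^ 2 * lam i ^ 2 := by
            rw [one_mul]
            exact Finset.sum_congr rfl fun i _ => by ring
    have hNnn : 0 ≤ N (fun i => lam i * x i) := hN.1 _
    calc N (fun i => lam i * x i)
        = Real.sqrt (N (fun i => lam i * x i) ^ 2) := (Real.sqrt_sq hNnn).symm
      _ ≤ Real.sqrt (dualNR (powNorm 2 (dualNR N)) (fun i => lam i ^ 2)) :=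
          Real.sqrt_le_sqrt (le_trans hcs hmem)
  · -- RHS ≤ LHS
    have key : dualNR (powNorm 2 (dualNR N)) (fun i => lam i ^ 2) ≤
        (sSup {r : ℝ | ∃ x : Fin n → ℝ, Real.sqrt (∑ i, x i ^ 2) ≤ 1 ∧
          r = N (fun i => lam i * x i)}) ^ 2 := by
      apply Real.sSup_le _ (sq_nonneg _)
      rintro r ⟨μ, hμ, rfl⟩
      simp only [powNorm] at hμ
      set g : Fin n → ℝ := fun i => |μ i| ^ ((1:ℝ)/2) with hgdef
      have hgN : dualNR N g ≤ 1 := by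
        rw [Real.rpow_two] at hμ
        nlinarith [dual_nonneg hN g]
      have hg2 : ∀ i, g i ^ 2 = |μ i| := fun i => rpow_half_sq (μ i)
      have hS0 : 0 ≤ ∑ i, |μ i| * lam i ^ 2 :=
        Finset.sum_nonneg fun i _ => mul_nonneg (abs_nonneg _) (sq_nonneg _)
      have habs : |∑ i, μ i * lam i ^ 2| ≤ ∑ i, |μ i| * lam i ^ 2 :=
        le_trans (Finset.abs_sum_le_sum_abs _ _)
          (le_of_eq (Finset.sum_congr rfl fun i _ => by
            rw [abs_mul, _root_.abs_of_nonneg (sq_nonneg (lam i))]))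
      rcases eq_or_lt_of_le hS0 with h0 | h0
      · calc |∑ i, μ i * (fun i => lam i ^ 2) i| ≤ ∑ i, |μ i| * lam i ^ 2 := habs
          _ = 0 := h0.symm
          _ ≤ _ := sq_nonneg _
      · set s := Real.sqrt (∑ i, |μ i| * lam i ^ 2) with hsdef
        have hs0 : 0 < s := Real.sqrt_pos.2 h0
        have hs2 : s ^ 2 = ∑ i, |μ i| * lam i ^ 2 := Real.sq_sqrt hS0
        set x : Fin n → ℝ := fun i => lam i * g i / s with hxdef
        have hxi : ∀ i, x i ^ 2 = |μ i| * lam i ^ 2 / (∑ i, |μ i| * lam i ^ 2) := by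
          intro i
          have h1 : x i ^ 2 = lam i ^ 2 * g i ^ 2 / s ^ 2 := by
            simp only [hxdef]
            rw [div_pow, mul_pow]
          rw [h1, hg2 i, hs2]
          ring
        have hxsum : ∑ i, x i ^ 2 = 1 := by
          rw [Finset.sum_congr rfl fun i _ => hxi i, ← Finset.sum_div]
          field_simp
        have hmemL : N (fun i => lam i * x i) ≤
            sSup {r : ℝ | ∃ x : Fin n → ℝ, Real.sqrt (∑ i, x i ^ 2) ≤ 1 ∧
              r = N (fun i => lam i * x i)} := by
          apply le_csSup hbddL
          exact ⟨x, by rw [hxsum, Real.sqrt_one], rfl⟩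
        have hsle : s ≤ N (fun i => lam i * x i) := by
          have hpair := dual_pairing hN (fun i => lam i * x i) g
          have hsum : ∑ i, (lam i * x i) * g i = s := by
            have hterm : ∀ i, (lam i * x i) * g i = |μ i| * lam i ^ 2 / s := by
              intro i
              have : (lam i * x i) * g i = lam i ^ 2 * g i ^ 2 / s := by
                simp only [hxdef]
                field_simp
              rw [this, hg2 i]
              ring
            rw [Finset.sum_congr rfl fun i _ => hterm i, ← Finset.sum_div, hsdef]
            exact Real.div_sqrt
          calc s = ∑ i, (lam i * x i) * g i := hsum.symm
            _ ≤ |∑ i, (lam i * x i) * g i| := le_abs_self _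
            _ ≤ N (fun i => lam i * x i) * dualNR N g := hpair
            _ ≤ N (fun i => lam i * x i) * 1 :=
                mul_le_mul_of_nonneg_left hgN (hN.1 _)
            _ = N (fun i => lam i * x i) := mul_one _
        calc |∑ i, μ i * (fun i => lam i ^ 2) i| ≤ ∑ i, |μ i| * lam i ^ 2 := habs
          _ = s ^ 2 := hs2.symm
          _ ≤ N (fun i => lam i * x i) ^ 2 := pow_le_pow_left₀ hs0.le hsle 2
          _ ≤ _ := pow_le_pow_left₀ (hN.1 _) hmemL 2
    calc Real.sqrt (dualNR (powNorm 2 (dualNR N)) (fun i => lam i ^ 2))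
        ≤ Real.sqrt ((sSup {r : ℝ | ∃ x : Fin n → ℝ, Real.sqrt (∑ i, x i ^ 2) ≤ 1 ∧
            r = N (fun i => lam i * x i)}) ^ 2) := Real.sqrt_le_sqrt key
      _ = _ := Real.sqrt_sq hL0


end Paper
end
end

section
/- Let X be an n-dimensional Banach lattice with M_(2)(X) = 1, E a Banach space, and λ ∈ ℝⁿ. Then the operator D_λ ⊗ id : ℓ₂ⁿ(E) → X(E), sending (x₁,…,xₙ) to (λ₁x₁,…,λₙxₙ), has operator norm at most ‖D_λ : ℓ₂ⁿ → X‖. -/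
open Complex MeasureTheory Finset

noncomputable section

namespace Paper

variable {Ω : Type*} [MeasurableSpace Ω] {μ : Measure Ω} {K : Type*} [RCLike K]

/-- `‖D_λ ⊗ id : ℓ₂ⁿ(E) → X(E)‖ ≤ ‖D_λ : ℓ₂ⁿ → X‖` for a
2-concave (constant 1) lattice norm `N` and a Banach space `E`. -/
theorem statement2 {n : ℕ} (N : (Fin n → ℝ) → ℝ) (hN : IsLatticeNorm N)
    (hconc : ConcaveWith 2 1 N) {E : Type*} [NormedAddCommGroup E]
    [NormedSpace ℝ E] [CompleteSpace E] (lam : Fin n → ℝ) (x : Fin n → E) :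
    N (fun i => ‖lam i • x i‖) ≤
      sSup {r : ℝ | ∃ y : Fin n → ℝ, Real.sqrt (∑ i, y i ^ 2) ≤ 1 ∧
          r = N (fun i => lam i * y i)} * Real.sqrt (∑ i, ‖x i‖ ^ 2) := by
  obtain ⟨hpos, hzero, hhom, hadd, hmono⟩ := hN
  have habs : ∀ u v : Fin n → ℝ, (∀ i, |u i| = |v i|) → N u = N v := fun u v h =>
    le_antisymm (hmono _ _ fun i => (h i).le) (hmono _ _ fun i => (h i).ge)
  have hN0 : N 0 = 0 := by
    have := hhom 0 0
    simpa using this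
  set S := Real.sqrt (∑ i, ‖x i‖ ^ 2) with hS
  have hsum_nonneg : (0:ℝ) ≤ ∑ i, ‖x i‖ ^ 2 :=
    Finset.sum_nonneg fun i _ => sq_nonneg _
  by_cases hSz : S = 0
  · have hsum : (∑ i, ‖x i‖ ^ 2) = 0 := by
      have := Real.sqrt_eq_zero hsum_nonneg |>.mp hSz
      exact this
    have hx : ∀ i, x i = 0 := by
      intro i
      have h := (Finset.sum_eq_zero_iff_of_nonneg (fun i _ => sq_nonneg ‖x i‖)).mp hsum i (Finset.mem_univ i)
      have : ‖x i‖ = 0 := by nlinarith [sq_nonneg ‖x i‖]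
      exact norm_eq_zero.mp this
    have : (fun i => ‖lam i • x i‖) = 0 := by
      funext i; simp [hx i]
    rw [this, hN0, hSz, mul_zero]
  · have hSpos : 0 < S := lt_of_le_of_ne (Real.sqrt_nonneg _) (Ne.symm hSz)
    set y : Fin n → ℝ := fun i => ‖x i‖ / S with hy
    have hS2 : S ^ 2 = ∑ i, ‖x i‖ ^ 2 := Real.sq_sqrt hsum_nonneg
    have hy1 : Real.sqrt (∑ i, y i ^ 2) ≤ 1 := by
      have : ∑ i, y i ^ 2 = 1 := by
        simp only [hy, div_pow]
        rw [← Finset.sum_div, ← hS2, div_self (by positivity)]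
      rw [this, Real.sqrt_one]
    have hbdd : BddAbove {r : ℝ | ∃ y : Fin n → ℝ, Real.sqrt (∑ i, y i ^ 2) ≤ 1 ∧
        r = N (fun i => lam i * y i)} := by
      refine ⟨N (fun i => |lam i|), ?_⟩
      rintro r ⟨z, hz, rfl⟩
      refine hmono _ _ fun i => ?_
      have hz2 : ∑ j, z j ^ 2 ≤ 1 := by
        by_contra h
        push_neg at h
        have := Real.lt_sqrt (by norm_num : (0:ℝ) ≤ 1) |>.mpr (by simpa using h)
        linarith
      have hzi : z i ^ 2 ≤ 1 :=
        le_trans (Finset.single_le_sum (fun j _ => sq_nonneg (z j)) (Finset.mem_univ i)) hz2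
      have hzi1 : |z i| ≤ 1 := abs_le_one_iff_mul_self_le_one.mpr (by nlinarith)
      rw [abs_mul, _root_.abs_abs]
      calc |lam i| * |z i| ≤ |lam i| * 1 :=
            mul_le_mul_of_nonneg_left hzi1 (abs_nonneg _)
        _ = |lam i| := mul_one _
    have hle : N (fun i => lam i * y i) ≤
        sSup {r : ℝ | ∃ y : Fin n → ℝ, Real.sqrt (∑ i, y i ^ 2) ≤ 1 ∧
          r = N (fun i => lam i * y i)} :=
      le_csSup hbdd ⟨y, hy1, rfl⟩
    have key : N (fun i => ‖lam i • x i‖) = S * N (fun i => lam i * y i) := by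
      have h1 : N (fun i => ‖lam i • x i‖) = N (S • fun i => lam i * y i) := by
        refine habs _ _ fun i => ?_
        simp only [Pi.smul_apply, smul_eq_mul, hy]
        rw [abs_norm, norm_smul, abs_mul, abs_mul, abs_div, abs_norm,
          abs_of_pos hSpos]
        field_simp
        rw [Real.norm_eq_abs]; ring
      rw [h1, hhom, abs_of_pos hSpos]
    rw [key, mul_comm]
    exact mul_le_mul_of_nonneg_right hle hSpos.le

end Paper
end
end

section
/- Let X₀, X₁ be n-dimensional Banach lattices on ℝⁿ and 0 < θ < 1. Then the dual lattice of the Calderón product X₀^{1-θ}X₁^{θ} equals (X₀')^{1-θ}(X₁')^{θ} isometrically. -/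
open Complex MeasureTheory Finset

noncomputable section

namespace Paper

variable {Ω : Type*} [MeasurableSpace Ω] {μ : Measure Ω} {K : Type*} [RCLike K]

section Aux

variable {n : ℕ}

/-- The set whose supremum is the dual norm. -/
def dualSet (N : (Fin n → ℝ) → ℝ) (y : Fin n → ℝ) : Set ℝ :=
  {r : ℝ | ∃ x, N x ≤ 1 ∧ r = |∑ i, x i * y i|}

lemma dualNR_eq (N : (Fin n → ℝ) → ℝ) (y : Fin n → ℝ) :
    dualNR N y = sSup (dualSet N y) := rfl

/-- A norm-like function admits coordinate lower bounds. -/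
def HasCoordLB (N : (Fin n → ℝ) → ℝ) : Prop :=
  ∃ K : Fin n → ℝ, (∀ i, 0 < K i) ∧ ∀ x i, |x i| * K i ≤ N x

namespace IsLatticeNorm

variable {N : (Fin n → ℝ) → ℝ}

lemma nonneg (h : IsLatticeNorm N) : ∀ x, 0 ≤ N x := h.1
lemma definite (h : IsLatticeNorm N) : ∀ x, N x = 0 → x = 0 := h.2.1
lemma homog (h : IsLatticeNorm N) : ∀ (c : ℝ) x, N (c • x) = |c| * N x := h.2.2.1
lemma triangle (h : IsLatticeNorm N) : ∀ x y, N (x + y) ≤ N x + N y := h.2.2.2.1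
lemma mono (h : IsLatticeNorm N) : ∀ x y, (∀ i, |x i| ≤ |y i|) → N x ≤ N y := h.2.2.2.2

lemma zero (h : IsLatticeNorm N) : N 0 = 0 := by
  have := h.homog 0 0
  simpa using this

lemma coord (h : IsLatticeNorm N) (x : Fin n → ℝ) (i : Fin n) :
    |x i| * N (Pi.single i 1) ≤ N x := by
  calc |x i| * N (Pi.single i 1) = N ((x i • (Pi.single i 1 : Fin n → ℝ))) := (h.homog (x i) (Pi.single i 1)).symm
    _ ≤ N x := by
      refine h.mono _ _ fun j => ?_
      rcases eq_or_ne j i with rfl | hji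
      · simp
      · simp [Pi.single_apply, hji]

lemma single_pos (h : IsLatticeNorm N) (i : Fin n) : 0 < N (Pi.single i 1) := by
  rcases (h.nonneg (Pi.single i 1)).eq_or_lt with h0 | h0
  · exfalso
    have h1 := h.definite _ h0.symm
    have := congrFun h1 i
    simp at this
  · exact h0

lemma hasCoordLB (h : IsLatticeNorm N) : HasCoordLB N :=
  ⟨fun i => N (Pi.single i 1), h.single_pos, h.coord⟩

end IsLatticeNorm

lemma dualSet_nonempty {N : (Fin n → ℝ) → ℝ} (h0 : N 0 ≤ 1) (y : Fin n → ℝ) :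
    (dualSet N y).Nonempty :=
  ⟨_, 0, h0, rfl⟩

lemma dualSet_bddAbove {N : (Fin n → ℝ) → ℝ} (h : HasCoordLB N) (y : Fin n → ℝ) :
    BddAbove (dualSet N y) := by
  obtain ⟨K, hKpos, hK⟩ := h
  refine ⟨∑ i, (K i)⁻¹ * |y i|, ?_⟩
  rintro r ⟨x, hx, rfl⟩
  calc |∑ i, x i * y i| ≤ ∑ i, |x i * y i| := Finset.abs_sum_le_sum_abs _ _
    _ ≤ ∑ i, (K i)⁻¹ * |y i| := by
        refine Finset.sum_le_sum fun i _ => ?_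
        rw [abs_mul]
        refine mul_le_mul_of_nonneg_right ?_ (abs_nonneg _)
        rw [inv_eq_one_div, le_div_iff₀ (hKpos i)]
        exact (hK x i).trans hx

lemma le_dualNR {N : (Fin n → ℝ) → ℝ} (h : HasCoordLB N) {x : Fin n → ℝ}
    (y : Fin n → ℝ) (hx : N x ≤ 1) : |∑ i, x i * y i| ≤ dualNR N y :=
  le_csSup (dualSet_bddAbove h y) ⟨x, hx, rfl⟩

lemma dualNR_nonneg (N : (Fin n → ℝ) → ℝ) (y : Fin n → ℝ) : 0 ≤ dualNR N y :=
  Real.sSup_nonneg fun r => by rintro ⟨x, _, rfl⟩; exact abs_nonneg _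

lemma dualNR_coordLB {N : (Fin n → ℝ) → ℝ} (h : IsLatticeNorm N) :
    HasCoordLB (dualNR N) := by
  refine ⟨fun i => (N (Pi.single i 1))⁻¹, fun i => inv_pos.mpr (h.single_pos i), fun x i => ?_⟩
  have hw : N (((N (Pi.single i 1))⁻¹ • (Pi.single i 1 : Fin n → ℝ))) ≤ 1 := by
    rw [h.homog ((N (Pi.single i 1))⁻¹) (Pi.single i 1),
      abs_of_pos (inv_pos.mpr (h.single_pos i)),
      inv_mul_cancel₀ (ne_of_gt (h.single_pos i))]
  have h1 := le_dualNR h.hasCoordLB x hw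
  have h2 : ∑ j, ((N (Pi.single i 1))⁻¹ • (Pi.single i 1 : Fin n → ℝ)) j * x j
      = (N (Pi.single i 1))⁻¹ * x i := by
    rw [Finset.sum_eq_single i]
    · simp
    · intro j _ hji; simp [Pi.single_apply, hji]
    · simp
  rw [h2, abs_mul, abs_of_pos (inv_pos.mpr (h.single_pos i))] at h1
  calc |x i| * (N (Pi.single i 1))⁻¹ = (N (Pi.single i 1))⁻¹ * |x i| := mul_comm _ _
    _ ≤ dualNR N x := h1

lemma pairing_le {N : (Fin n → ℝ) → ℝ} (h : IsLatticeNorm N) (x y : Fin n → ℝ) :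
    |∑ i, x i * y i| ≤ N x * dualNR N y := by
  rcases (h.nonneg x).eq_or_lt with h0 | h0
  · have hx0 : x = 0 := h.definite x h0.symm
    simp [hx0, h.zero]
  · have hx' : N ((N x)⁻¹ • x) ≤ 1 := by
      rw [h.homog, abs_of_pos (inv_pos.mpr h0), inv_mul_cancel₀ (ne_of_gt h0)]
    have h1 := le_dualNR h.hasCoordLB y hx'
    have h2 : ∑ i, ((N x)⁻¹ • x) i * y i = (N x)⁻¹ * ∑ i, x i * y i := by
      rw [Finset.mul_sum]
      exact Finset.sum_congr rfl fun i _ => by simp [mul_assoc]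
    rw [h2, abs_mul, abs_of_pos (inv_pos.mpr h0)] at h1
    calc |∑ i, x i * y i| = N x * ((N x)⁻¹ * |∑ i, x i * y i|) := by
          field_simp
      _ ≤ N x * dualNR N y := mul_le_mul_of_nonneg_left h1 h0.le

lemma abs_pairing_le {N : (Fin n → ℝ) → ℝ} (h : IsLatticeNorm N) (a b : Fin n → ℝ) :
    ∑ i, |a i| * |b i| ≤ N a * dualNR N b := by
  set a' : Fin n → ℝ := fun i => if 0 ≤ b i then |a i| else -|a i| with ha'
  have habs : ∀ i, |a' i| = |a i| := fun i => by
    by_cases hb : 0 ≤ b i <;> simp [ha', hb]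
  have hsum : ∑ i, a' i * b i = ∑ i, |a i| * |b i| := by
    refine Finset.sum_congr rfl fun i _ => ?_
    by_cases hb : 0 ≤ b i
    · have h1 : a' i = |a i| := by simp [ha', hb]
      rw [h1, _root_.abs_of_nonneg hb]
    · push_neg at hb
      rw [ha']
      simp only [if_neg (not_le.mpr hb), _root_.abs_of_neg hb]
      ring
  have hNa : N a' = N a :=
    le_antisymm (h.mono _ _ fun i => (habs i).le) (h.mono _ _ fun i => (habs i).ge)
  calc ∑ i, |a i| * |b i| = |∑ i, a' i * b i| := by
        rw [hsum, _root_.abs_of_nonneg (Finset.sum_nonneg fun i _ =>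
          mul_nonneg (abs_nonneg _) (abs_nonneg _))]
    _ ≤ N a' * dualNR N b := pairing_le h a' b
    _ = N a * dualNR N b := by rw [hNa]

/-- Biduality via Hahn–Banach. -/
lemma bidual_s3 {N : (Fin n → ℝ) → ℝ} (h : IsLatticeNorm N) (y : Fin n → ℝ) :
    dualNR (dualNR N) y = N y := by
  refine le_antisymm ?_ ?_
  · refine Real.sSup_le ?_ (h.nonneg y)
    rintro r ⟨x, hx, rfl⟩
    have h2 : ∑ i, x i * y i = ∑ i, y i * x i :=
      Finset.sum_congr rfl fun i _ => mul_comm _ _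
    rw [h2]
    calc |∑ i, y i * x i| ≤ N y * dualNR N x := pairing_le h y x
      _ ≤ N y * 1 := mul_le_mul_of_nonneg_left hx (h.nonneg y)
      _ = N y := mul_one _
  · rcases eq_or_ne y 0 with rfl | hy
    · rw [h.zero]
      exact dualNR_nonneg _ 0
    · have hsub : ∀ z : (LinearPMap.mkSpanSingleton (K := ℝ) (σ := RingHom.id ℝ) y (N y) hy).domain,
        (LinearPMap.mkSpanSingleton (K := ℝ) (σ := RingHom.id ℝ) y (N y) hy) z ≤ N z := by
        rintro ⟨z, hz⟩
        obtain ⟨c, rfl⟩ := Submodule.mem_span_singleton.mp hz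
        have happ : (LinearPMap.mkSpanSingleton (K := ℝ) (σ := RingHom.id ℝ) y (N y) hy) ⟨c • y, hz⟩
            = c • (N y) := LinearPMap.mkSpanSingleton'_apply _ _ _ c hz
        rw [happ, smul_eq_mul]
        calc c * N y ≤ |c| * N y :=
              mul_le_mul_of_nonneg_right (le_abs_self c) (h.nonneg y)
          _ = N (c • y) := (h.homog c y).symm
      obtain ⟨g, hg, hgle⟩ := exists_extension_of_le_sublinear
        (LinearPMap.mkSpanSingleton (K := ℝ) (σ := RingHom.id ℝ) y (N y) hy) N
        (fun c hc x => by rw [h.homog, abs_of_pos hc]) h.triangle hsub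
      set x : Fin n → ℝ := fun i => g (Pi.single i 1) with hxdef
      have hgx : ∀ w : Fin n → ℝ, g w = ∑ i, w i * x i := by
        intro w
        rw [LinearMap.pi_apply_eq_sum_univ g w]
        refine Finset.sum_congr rfl fun i _ => ?_
        rw [smul_eq_mul, hxdef]
        congr 2
        funext j
        simp [Pi.single_apply, eq_comm]
      have hgabs : ∀ w, |g w| ≤ N w := by
        intro w
        rw [abs_le]
        refine ⟨?_, hgle w⟩
        have h3 := hgle (-w)
        rw [map_neg] at h3
        have hN : N (-w) = N w := by
          have he : (-w) = (-1 : ℝ) • w := by funext i; simp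
          rw [he, h.homog]; norm_num
        rw [hN] at h3
        linarith
      have hxd : dualNR N x ≤ 1 := by
        refine Real.sSup_le ?_ zero_le_one
        rintro r ⟨w, hw, rfl⟩
        rw [← hgx w]
        exact (hgabs w).trans hw
      have hgy : g y = N y := by
        have h4 := hg ⟨y, Submodule.mem_span_singleton_self y⟩
        rw [h4]
        exact LinearPMap.mkSpanSingleton_apply ℝ ℝ (σ := RingHom.id ℝ) hy (N y)
      have h5 : N y = |∑ i, x i * y i| := by
        have h6 : ∑ i, x i * y i = ∑ i, y i * x i :=
          Finset.sum_congr rfl fun i _ => mul_comm _ _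
        rw [h6, ← hgx y, hgy, _root_.abs_of_nonneg (h.nonneg y)]
      rw [h5]
      exact le_dualNR (dualNR_coordLB h) y hxd

end Aux

section P2
variable {n : ℕ}

variable {θ : ℝ} {N₀ N₁ : (Fin n → ℝ) → ℝ}

lemma rpow_split {θ a : ℝ} (hθ : 0 < θ) (hθ1 : θ < 1) (ha : 0 ≤ a) :
    a ^ (1 - θ) * a ^ θ = a := by
  rcases ha.eq_or_lt with h | h
  · rw [← h, Real.zero_rpow (by linarith : (1:ℝ) - θ ≠ 0), zero_mul]
  · rw [← Real.rpow_add h, sub_add_cancel, Real.rpow_one]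

lemma hoelder2 (hθ : 0 < θ) (hθ1 : θ < 1) {a b c d : ℝ}
    (ha : 0 ≤ a) (hb : 0 ≤ b) (hc : 0 ≤ c) (hd : 0 ≤ d) :
    a ^ (1 - θ) * b ^ θ + c ^ (1 - θ) * d ^ θ ≤ (a + c) ^ (1 - θ) * (b + d) ^ θ := by
  rcases (add_nonneg ha hc).eq_or_lt with hac | hac
  · have ha0 : a = 0 := by linarith
    have hc0 : c = 0 := by linarith
    simp [ha0, hc0, Real.zero_rpow (by linarith : (1:ℝ) - θ ≠ 0)]
  rcases (add_nonneg hb hd).eq_or_lt with hbd | hbd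
  · have hb0 : b = 0 := by linarith
    have hd0 : d = 0 := by linarith
    simp [hb0, hd0, Real.zero_rpow (ne_of_gt hθ)]
  have hA : (0:ℝ) < (a + c) ^ (1 - θ) := Real.rpow_pos_of_pos hac _
  have hB : (0:ℝ) < (b + d) ^ θ := Real.rpow_pos_of_pos hbd _
  have key : ∀ p q : ℝ, 0 ≤ p → 0 ≤ q →
      p ^ (1-θ) * q ^ θ ≤ (a+c) ^ (1-θ) * (b+d) ^ θ * ((1-θ) * (p/(a+c)) + θ * (q/(b+d))) := by
    intro p q hp hq
    have hgm := Real.geom_mean_le_arith_mean2_weighted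
      (by linarith : (0:ℝ) ≤ 1 - θ) hθ.le (div_nonneg hp hac.le) (div_nonneg hq hbd.le)
      (by ring)
    calc p ^ (1-θ) * q ^ θ
        = (a+c) ^ (1-θ) * (b+d) ^ θ * ((p/(a+c)) ^ (1-θ) * (q/(b+d)) ^ θ) := by
          rw [Real.div_rpow hp hac.le, Real.div_rpow hq hbd.le]
          field_simp
      _ ≤ _ := mul_le_mul_of_nonneg_left hgm (by positivity)
  have h1 := key a b ha hb
  have h2 := key c d hc hd
  have hsum : ((1-θ) * (a/(a+c)) + θ * (b/(b+d))) + ((1-θ) * (c/(a+c)) + θ * (d/(b+d))) = 1 := by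
    field_simp
    ring
  calc a ^ (1-θ) * b ^ θ + c ^ (1-θ) * d ^ θ
      ≤ (a+c) ^ (1-θ) * (b+d) ^ θ * (((1-θ) * (a/(a+c)) + θ * (b/(b+d)))
          + ((1-θ) * (c/(a+c)) + θ * (d/(b+d)))) := by
        rw [mul_add]
        exact add_le_add h1 h2
    _ = (a + c) ^ (1 - θ) * (b + d) ^ θ := by rw [hsum, mul_one]

lemma hoelder_sum (hθ : 0 < θ) (hθ1 : θ < 1) (a b : Fin n → ℝ)
    (ha : ∀ i, 0 ≤ a i) (hb : ∀ i, 0 ≤ b i) :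
    ∑ i, a i ^ (1 - θ) * b i ^ θ ≤ (∑ i, a i) ^ (1 - θ) * (∑ i, b i) ^ θ := by
  have H : ∀ s : Finset (Fin n), ∑ i ∈ s, a i ^ (1-θ) * b i ^ θ
      ≤ (∑ i ∈ s, a i) ^ (1-θ) * (∑ i ∈ s, b i) ^ θ := by
    intro s
    induction s using Finset.cons_induction with
    | empty => simp [Real.zero_rpow (ne_of_gt hθ)]
    | cons j s hj ih =>
      rw [Finset.sum_cons, Finset.sum_cons, Finset.sum_cons]
      calc a j ^ (1-θ) * b j ^ θ + ∑ i ∈ s, a i ^ (1-θ) * b i ^ θ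
          ≤ a j ^ (1-θ) * b j ^ θ + (∑ i ∈ s, a i) ^ (1-θ) * (∑ i ∈ s, b i) ^ θ :=
            add_le_add le_rfl ih
        _ ≤ _ := hoelder2 hθ hθ1 (ha j) (hb j)
              (Finset.sum_nonneg fun i _ => ha i) (Finset.sum_nonneg fun i _ => hb i)
  exact H Finset.univ

/-- `κ a^{1-θ} b^θ ≤ a + b` where `κ = ((1-θ)/θ)^θ + (θ/(1-θ))^{1-θ}`. -/
lemma kappa_amgm (hθ : 0 < θ) (hθ1 : θ < 1) {a b : ℝ} (ha : 0 ≤ a) (hb : 0 ≤ b) :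
    (((1-θ)/θ) ^ θ + (θ/(1-θ)) ^ (1-θ)) * (a ^ (1-θ) * b ^ θ) ≤ a + b := by
  have hθ1' : (0:ℝ) < 1 - θ := by linarith
  have e1 : ((1-θ)/θ) ^ θ * (a ^ (1-θ) * b ^ θ) = a ^ (1-θ) * ((1-θ)*b/θ) ^ θ := by
    rw [show (1-θ)*b/θ = ((1-θ)/θ) * b by ring,
      Real.mul_rpow (by positivity) hb]
    ring
  have e2 : (θ/(1-θ)) ^ (1-θ) * (a ^ (1-θ) * b ^ θ) = (θ*a/(1-θ)) ^ (1-θ) * b ^ θ := by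
    rw [show θ*a/(1-θ) = (θ/(1-θ)) * a by ring,
      Real.mul_rpow (by positivity) ha]
    ring
  have g1 := Real.geom_mean_le_arith_mean2_weighted (le_of_lt hθ1') hθ.le ha
    (by positivity : (0:ℝ) ≤ (1-θ)*b/θ) (by ring)
  have g2 := Real.geom_mean_le_arith_mean2_weighted (le_of_lt hθ1') hθ.le
    (by positivity : (0:ℝ) ≤ θ*a/(1-θ)) hb (by ring)
  have g2' : (θ*a/(1-θ)) ^ (1-θ) * b ^ θ ≤ θ * a + θ * b := by
    calc (θ*a/(1-θ)) ^ (1-θ) * b ^ θ ≤ (1-θ) * (θ*a/(1-θ)) + θ * b := g2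
      _ = θ * a + θ * b := by field_simp
  have g1' : a ^ (1-θ) * ((1-θ)*b/θ) ^ θ ≤ (1-θ) * a + (1-θ) * b := by
    calc a ^ (1-θ) * ((1-θ)*b/θ) ^ θ ≤ (1-θ) * a + θ * ((1-θ)*b/θ) := g1
      _ = (1-θ) * a + (1-θ) * b := by field_simp
  calc (((1-θ)/θ) ^ θ + (θ/(1-θ)) ^ (1-θ)) * (a ^ (1-θ) * b ^ θ)
      = a ^ (1-θ) * ((1-θ)*b/θ) ^ θ + (θ*a/(1-θ)) ^ (1-θ) * b ^ θ := by
        rw [add_mul, e1, e2]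
    _ ≤ ((1-θ) * a + (1-θ) * b) + (θ * a + θ * b) := add_le_add g1' g2'
    _ = a + b := by ring

end P2

section P3
variable {n : ℕ} {θ : ℝ} {N₀ N₁ : (Fin n → ℝ) → ℝ}

/-- The set whose infimum defines the Calderón product norm. -/
def calSet (θ : ℝ) (N₀ N₁ : (Fin n → ℝ) → ℝ) (f : Fin n → ℝ) : Set ℝ :=
  {c : ℝ | ∃ g h : Fin n → ℝ, (∀ i, |f i| = |g i| ^ (1 - θ) * |h i| ^ θ) ∧
    c = N₀ g ^ (1 - θ) * N₁ h ^ θ}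

lemma calNorm_eq (θ : ℝ) (N₀ N₁ : (Fin n → ℝ) → ℝ) (f : Fin n → ℝ) :
    calNorm θ N₀ N₁ f = sInf (calSet θ N₀ N₁ f) := rfl

lemma calSet_nonneg (h₀ : IsLatticeNorm N₀) (h₁ : IsLatticeNorm N₁) {f : Fin n → ℝ} :
    ∀ c ∈ calSet θ N₀ N₁ f, 0 ≤ c := by
  rintro c ⟨g, k, _, rfl⟩
  exact mul_nonneg (Real.rpow_nonneg (h₀.nonneg g) _) (Real.rpow_nonneg (h₁.nonneg k) _)

lemma calSet_self_mem (hθ : 0 < θ) (hθ1 : θ < 1) (f : Fin n → ℝ) :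
    N₀ f ^ (1 - θ) * N₁ f ^ θ ∈ calSet θ N₀ N₁ f :=
  ⟨f, f, fun i => (rpow_split hθ hθ1 (abs_nonneg _)).symm, rfl⟩

lemma calSet_nonempty (hθ : 0 < θ) (hθ1 : θ < 1) (f : Fin n → ℝ) :
    (calSet θ N₀ N₁ f).Nonempty :=
  ⟨_, calSet_self_mem hθ hθ1 f⟩

lemma calSet_bddBelow (h₀ : IsLatticeNorm N₀) (h₁ : IsLatticeNorm N₁) (f : Fin n → ℝ) :
    BddBelow (calSet θ N₀ N₁ f) :=
  ⟨0, fun c hc => calSet_nonneg h₀ h₁ c hc⟩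

lemma calNorm_nonneg (h₀ : IsLatticeNorm N₀) (h₁ : IsLatticeNorm N₁) (f : Fin n → ℝ) :
    0 ≤ calNorm θ N₀ N₁ f :=
  Real.sInf_nonneg (calSet_nonneg h₀ h₁)

lemma calNorm_le (h₀ : IsLatticeNorm N₀) (h₁ : IsLatticeNorm N₁) {f : Fin n → ℝ} {c : ℝ}
    (hc : c ∈ calSet θ N₀ N₁ f) : calNorm θ N₀ N₁ f ≤ c :=
  csInf_le (calSet_bddBelow h₀ h₁ f) hc

lemma calSet_coordLB (hθ : 0 < θ) (hθ1 : θ < 1)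
    (h₀ : IsLatticeNorm N₀) (h₁ : IsLatticeNorm N₁) (f : Fin n → ℝ) (i : Fin n) :
    ∀ c ∈ calSet θ N₀ N₁ f,
      |f i| * (N₀ (Pi.single i 1) ^ (1 - θ) * N₁ (Pi.single i 1) ^ θ) ≤ c := by
  rintro c ⟨g, k, hfac, rfl⟩
  have hg := h₀.coord g i
  have hk := h₁.coord k i
  have h1 : (|g i| * N₀ (Pi.single i 1)) ^ (1-θ) ≤ N₀ g ^ (1-θ) :=
    Real.rpow_le_rpow (mul_nonneg (abs_nonneg _) (h₀.nonneg _)) hg (by linarith)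
  have h2 : (|k i| * N₁ (Pi.single i 1)) ^ θ ≤ N₁ k ^ θ :=
    Real.rpow_le_rpow (mul_nonneg (abs_nonneg _) (h₁.nonneg _)) hk hθ.le
  calc |f i| * (N₀ (Pi.single i 1) ^ (1-θ) * N₁ (Pi.single i 1) ^ θ)
      = (|g i| * N₀ (Pi.single i 1)) ^ (1-θ) * (|k i| * N₁ (Pi.single i 1)) ^ θ := by
        rw [Real.mul_rpow (abs_nonneg _) (h₀.nonneg _),
          Real.mul_rpow (abs_nonneg _) (h₁.nonneg _), hfac i]
        ring
    _ ≤ N₀ g ^ (1-θ) * N₁ k ^ θ :=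
        mul_le_mul h1 h2 (Real.rpow_nonneg (mul_nonneg (abs_nonneg _) (h₁.nonneg _)) _)
          (Real.rpow_nonneg (h₀.nonneg g) _)

lemma calNorm_coordLB (hθ : 0 < θ) (hθ1 : θ < 1)
    (h₀ : IsLatticeNorm N₀) (h₁ : IsLatticeNorm N₁) :
    HasCoordLB (calNorm θ N₀ N₁) := by
  refine ⟨fun i => N₀ (Pi.single i 1) ^ (1 - θ) * N₁ (Pi.single i 1) ^ θ,
    fun i => mul_pos (Real.rpow_pos_of_pos (h₀.single_pos i) _)
      (Real.rpow_pos_of_pos (h₁.single_pos i) _),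
    fun f i => le_csInf (calSet_nonempty hθ hθ1 f) (calSet_coordLB hθ hθ1 h₀ h₁ f i)⟩

lemma calNorm_zero_le (h₀ : IsLatticeNorm N₀) (h₁ : IsLatticeNorm N₁) (hθ : 0 < θ)
    (hθ1 : θ < 1) : calNorm θ N₀ N₁ (0 : Fin n → ℝ) ≤ 1 := by
  have hmem : (0:ℝ) ∈ calSet θ N₀ N₁ (0 : Fin n → ℝ) := by
    refine ⟨0, 0, fun i => ?_, ?_⟩
    · simp [Real.zero_rpow (by linarith : (1:ℝ) - θ ≠ 0)]
    · have hz : N₀ (0 : Fin n → ℝ) = 0 := by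
        have := h₀.homog 0 0; simpa using this
      have hz1 : N₁ (0 : Fin n → ℝ) = 0 := by
        have := h₁.homog 0 0; simpa using this
      rw [hz, hz1, Real.zero_rpow (by linarith : (1:ℝ) - θ ≠ 0), zero_mul]
  exact (calNorm_le h₀ h₁ hmem).trans zero_le_one

lemma calNorm_mono (hθ : 0 < θ) (hθ1 : θ < 1)
    (h₀ : IsLatticeNorm N₀) (h₁ : IsLatticeNorm N₁) {f f' : Fin n → ℝ}
    (hff : ∀ i, |f i| ≤ |f' i|) : calNorm θ N₀ N₁ f ≤ calNorm θ N₀ N₁ f' := by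
  refine le_csInf (calSet_nonempty hθ hθ1 f') ?_
  rintro c ⟨g, k, hfac, rfl⟩
  set lam : Fin n → ℝ := fun i => if f' i = 0 then 0 else |f i| / |f' i| with hlam
  have hlam0 : ∀ i, 0 ≤ lam i := by
    intro i
    by_cases h' : f' i = 0 <;> simp [hlam, h']
    positivity
  have hlam1 : ∀ i, lam i ≤ 1 := by
    intro i
    by_cases h' : f' i = 0
    · simp [hlam, h']
    · rw [hlam]
      simp only [if_neg h']
      rw [div_le_one (abs_pos.mpr h')]
      exact hff i
  have hmem : N₀ (fun i => lam i * g i) ^ (1-θ) * N₁ (fun i => lam i * k i) ^ θ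
      ∈ calSet θ N₀ N₁ f := by
    refine ⟨_, _, fun i => ?_, rfl⟩
    show |f i| = |lam i * g i| ^ (1-θ) * |lam i * k i| ^ θ
    by_cases h' : f' i = 0
    · have hf0 : |f i| = 0 := le_antisymm (by simpa [h'] using hff i) (abs_nonneg _)
      have hl0 : lam i = 0 := by simp [hlam, h']
      rw [hf0, hl0]
      simp [Real.zero_rpow (by linarith : (1:ℝ) - θ ≠ 0)]
    · have e1 : |lam i * g i| = lam i * |g i| := by
        rw [abs_mul, _root_.abs_of_nonneg (hlam0 i)]
      have e2 : |lam i * k i| = lam i * |k i| := by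
        rw [abs_mul, _root_.abs_of_nonneg (hlam0 i)]
      rw [e1, e2, Real.mul_rpow (hlam0 i) (abs_nonneg _),
        Real.mul_rpow (hlam0 i) (abs_nonneg _)]
      have e3 : lam i ^ (1-θ) * |g i| ^ (1-θ) * (lam i ^ θ * |k i| ^ θ)
          = (lam i ^ (1-θ) * lam i ^ θ) * (|g i| ^ (1-θ) * |k i| ^ θ) := by ring
      rw [e3, rpow_split hθ hθ1 (hlam0 i), ← hfac i]
      rw [hlam]
      simp only [if_neg h']
      rw [div_mul_cancel₀ _ (abs_ne_zero.mpr h')]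
  have hle : N₀ (fun i => lam i * g i) ^ (1-θ) * N₁ (fun i => lam i * k i) ^ θ
      ≤ N₀ g ^ (1-θ) * N₁ k ^ θ := by
    have hg' : N₀ (fun i => lam i * g i) ≤ N₀ g := by
      refine h₀.mono _ _ fun i => ?_
      rw [abs_mul, _root_.abs_of_nonneg (hlam0 i)]
      calc lam i * |g i| ≤ 1 * |g i| :=
            mul_le_mul_of_nonneg_right (hlam1 i) (abs_nonneg _)
        _ = |g i| := one_mul _
    have hk' : N₁ (fun i => lam i * k i) ≤ N₁ k := by
      refine h₁.mono _ _ fun i => ?_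
      rw [abs_mul, _root_.abs_of_nonneg (hlam0 i)]
      calc lam i * |k i| ≤ 1 * |k i| :=
            mul_le_mul_of_nonneg_right (hlam1 i) (abs_nonneg _)
        _ = |k i| := one_mul _
    exact mul_le_mul (Real.rpow_le_rpow (h₀.nonneg _) hg' (by linarith))
      (Real.rpow_le_rpow (h₁.nonneg _) hk' hθ.le)
      (Real.rpow_nonneg (h₁.nonneg _) _) (Real.rpow_nonneg (h₀.nonneg g) _)
  exact (calNorm_le h₀ h₁ hmem).trans hle

end P3



section MoreAux
variable {n : ℕ}

section S4
variable {N : (Fin n → ℝ) → ℝ}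

lemma dualNR_zero_le_one (N : (Fin n → ℝ) → ℝ) : dualNR N (0 : Fin n → ℝ) ≤ 1 := by
  refine Real.sSup_le ?_ zero_le_one
  rintro r ⟨x, _, rfl⟩
  simp

lemma dualNR_zero (N : (Fin n → ℝ) → ℝ) : dualNR N (0 : Fin n → ℝ) = 0 := by
  refine le_antisymm (Real.sSup_le ?_ le_rfl) (dualNR_nonneg N 0)
  rintro r ⟨x, _, rfl⟩
  simp

lemma dualNR_neg (N : (Fin n → ℝ) → ℝ) (y : Fin n → ℝ) :
    dualNR N (-y) = dualNR N y := by
  have e : {r : ℝ | ∃ x, N x ≤ 1 ∧ r = |∑ i, x i * (-y) i|}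
      = {r : ℝ | ∃ x, N x ≤ 1 ∧ r = |∑ i, x i * y i|} := by
    ext r
    constructor
    · rintro ⟨x, hx, rfl⟩
      refine ⟨x, hx, ?_⟩
      rw [← abs_neg, ← Finset.sum_neg_distrib]
      congr 1
      exact Finset.sum_congr rfl fun i _ => by simp
    · rintro ⟨x, hx, rfl⟩
      refine ⟨x, hx, ?_⟩
      rw [← abs_neg, ← Finset.sum_neg_distrib]
      congr 1
      exact Finset.sum_congr rfl fun i _ => by simp
  show sSup _ = sSup _
  rw [e]

lemma dualNR_smul_le (N : (Fin n → ℝ) → ℝ) (hN : HasCoordLB N) {a : ℝ} (ha : 0 ≤ a)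
    (g : Fin n → ℝ) : dualNR N (a • g) ≤ a * dualNR N g := by
  refine Real.sSup_le ?_ (mul_nonneg ha (dualNR_nonneg N g))
  rintro r ⟨x, hx, rfl⟩
  have e : ∑ i, x i * (a • g) i = a * ∑ i, x i * g i := by
    rw [Finset.mul_sum]
    exact Finset.sum_congr rfl fun i _ => by simp; ring
  rw [e, abs_mul, _root_.abs_of_nonneg ha]
  exact mul_le_mul_of_nonneg_left (le_dualNR hN g hx) ha

lemma dualNR_add_le (N : (Fin n → ℝ) → ℝ) (hN : HasCoordLB N) (g k : Fin n → ℝ) :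
    dualNR N (g + k) ≤ dualNR N g + dualNR N k := by
  refine Real.sSup_le ?_ (add_nonneg (dualNR_nonneg N g) (dualNR_nonneg N k))
  rintro r ⟨x, hx, rfl⟩
  have e : ∑ i, x i * (g + k) i = (∑ i, x i * g i) + ∑ i, x i * k i := by
    rw [← Finset.sum_add_distrib]
    exact Finset.sum_congr rfl fun i _ => by simp [mul_add]
  rw [e]
  exact (abs_add_le _ _).trans (add_le_add (le_dualNR hN g hx) (le_dualNR hN k hx))

lemma dualNR_isLatticeNorm (h : IsLatticeNorm N) : IsLatticeNorm (dualNR N) := by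
  obtain ⟨K, hKpos, hK⟩ := dualNR_coordLB h
  refine ⟨dualNR_nonneg N, ?_, ?_, fun g k => dualNR_add_le N h.hasCoordLB g k, ?_⟩
  · intro y hy
    funext i
    have h1 := hK y i
    rw [hy] at h1
    have h2 : |y i| ≤ 0 := by nlinarith [hKpos i, abs_nonneg (y i)]
    simpa using le_antisymm h2 (abs_nonneg _)
  · intro c y
    rcases eq_or_ne c 0 with rfl | hc
    · rw [zero_smul, abs_zero, zero_mul, dualNR_zero]
    · have habs : 0 < |c| := abs_pos.mpr hc
      refine le_antisymm ?_ ?_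
      · calc dualNR N (c • y) ≤ |c| * dualNR N ((|c|⁻¹ * c) • y) := by
              have e : c • y = |c| • ((|c|⁻¹ * c) • y) := by
                rw [smul_smul, ← mul_assoc, mul_inv_cancel₀ (ne_of_gt habs), one_mul]
              rw [e]
              exact dualNR_smul_le N h.hasCoordLB habs.le _
          _ ≤ |c| * dualNR N y := by
              refine mul_le_mul_of_nonneg_left ?_ habs.le
              refine Real.sSup_le ?_ (dualNR_nonneg N y)
              rintro r ⟨x, hx, rfl⟩
              have e2 : ∑ i, x i * ((|c|⁻¹ * c) • y) i = (|c|⁻¹ * c) * ∑ i, x i * y i := by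
                rw [Finset.mul_sum]
                exact Finset.sum_congr rfl fun i _ => by simp; ring
              rw [e2, abs_mul]
              have e3 : |(|c|⁻¹ * c)| = 1 := by
                rw [abs_mul, abs_inv, _root_.abs_abs, inv_mul_cancel₀ (ne_of_gt habs)]
              rw [e3, one_mul]
              exact le_dualNR h.hasCoordLB y hx
      · have h1 : dualNR N y ≤ |c|⁻¹ * dualNR N (c • y) := by
          calc dualNR N y = dualNR N (c⁻¹ • c • y) := by
                rw [smul_smul, inv_mul_cancel₀ hc, one_smul]
            _ ≤ |c⁻¹| * dualNR N (c • y) := by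
                rcases le_or_gt 0 c⁻¹ with hc' | hc'
                · rw [_root_.abs_of_nonneg hc']
                  exact dualNR_smul_le N h.hasCoordLB hc' _
                · rw [_root_.abs_of_neg hc']
                  have e4 : c⁻¹ • c • y = (-c⁻¹) • (-(c • y)) := by
                    rw [smul_neg, neg_smul, neg_neg]
                  rw [e4]
                  exact (dualNR_smul_le N h.hasCoordLB (by linarith) _).trans
                    (le_of_eq (by rw [dualNR_neg]))
            _ = |c|⁻¹ * dualNR N (c • y) := by rw [abs_inv]
        calc |c| * dualNR N y ≤ |c| * (|c|⁻¹ * dualNR N (c • y)) :=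
              mul_le_mul_of_nonneg_left h1 habs.le
          _ = dualNR N (c • y) := by field_simp
  · intro x y hxy
    refine Real.sSup_le ?_ (dualNR_nonneg N y)
    rintro r ⟨w, hw, rfl⟩
    calc |∑ i, w i * x i| ≤ ∑ i, |w i * x i| := Finset.abs_sum_le_sum_abs _ _
      _ = ∑ i, |w i| * |x i| := Finset.sum_congr rfl fun i _ => abs_mul _ _
      _ ≤ ∑ i, |w i| * |y i| := Finset.sum_le_sum fun i _ =>
          mul_le_mul_of_nonneg_left (hxy i) (abs_nonneg _)
      _ ≤ N w * dualNR N y := abs_pairing_le h w y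
      _ ≤ 1 * dualNR N y := mul_le_mul_of_nonneg_right hw (dualNR_nonneg N y)
      _ = dualNR N y := one_mul _

end S4

section S5
variable {n : ℕ}

lemma dualNR_coord_bound {N : (Fin n → ℝ) → ℝ} (hN : HasCoordLB N) :
    ∃ c : Fin n → ℝ, (∀ i, 0 ≤ c i) ∧ ∀ w : Fin n → ℝ, dualNR N w ≤ ∑ i, c i * |w i| := by
  obtain ⟨K, hKpos, hK⟩ := hN
  refine ⟨fun i => (K i)⁻¹, fun i => (inv_pos.mpr (hKpos i)).le, fun w => ?_⟩
  refine Real.sSup_le ?_ (Finset.sum_nonneg fun i _ =>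
    mul_nonneg (inv_pos.mpr (hKpos i)).le (abs_nonneg _))
  rintro r ⟨x, hx, rfl⟩
  calc |∑ i, x i * w i| ≤ ∑ i, |x i * w i| := Finset.abs_sum_le_sum_abs _ _
    _ ≤ ∑ i, (K i)⁻¹ * |w i| := by
        refine Finset.sum_le_sum fun i _ => ?_
        rw [abs_mul]
        refine mul_le_mul_of_nonneg_right ?_ (abs_nonneg _)
        rw [inv_eq_one_div, le_div_iff₀ (hKpos i)]
        exact (hK x i).trans hx

/-- A subadditive, symmetric, coordinatewise-bounded function is continuous. -/
lemma continuous_of_subadd {M : (Fin n → ℝ) → ℝ}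
    (hsub : ∀ a b, M (a + b) ≤ M a + M b) (hneg : ∀ a, M (-a) = M a)
    (hbd : ∃ c : Fin n → ℝ, (∀ i, 0 ≤ c i) ∧ ∀ w, M w ≤ ∑ i, c i * |w i|) :
    Continuous M := by
  obtain ⟨c, hc0, hc⟩ := hbd
  set C : ℝ := ∑ i, c i with hC
  have hC0 : 0 ≤ C := Finset.sum_nonneg fun i _ => hc0 i
  have key : ∀ a b : Fin n → ℝ, M a - M b ≤ C * dist a b := by
    intro a b
    have h1 : M a ≤ M b + M (a - b) := by
      have := hsub b (a - b)
      simpa using this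
    have h2 : M (a - b) ≤ ∑ i, c i * |a i - b i| := by
      have := hc (a - b)
      simpa using this
    have h3 : ∑ i, c i * |a i - b i| ≤ ∑ i, c i * dist a b := by
      refine Finset.sum_le_sum fun i _ => ?_
      refine mul_le_mul_of_nonneg_left ?_ (hc0 i)
      calc |a i - b i| = dist (a i) (b i) := (Real.dist_eq _ _).symm
        _ ≤ dist a b := dist_le_pi_dist a b i
    have h4 : ∑ i, c i * dist a b = C * dist a b := by
      rw [hC, Finset.sum_mul]
    linarith
  have lip : LipschitzWith (Real.toNNReal C) M := by
    refine LipschitzWith.of_dist_le_mul fun a b => ?_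
    rw [Real.dist_eq, Real.coe_toNNReal C hC0, abs_le]
    constructor
    · have := key b a
      rw [dist_comm b a] at this
      linarith
    · exact (key a b).trans (le_of_eq rfl)
  exact lip.continuous

lemma isCompact_ball_of {M : (Fin n → ℝ) → ℝ} (hM : Continuous M)
    (hK : HasCoordLB M) (r : ℝ) : IsCompact {g : Fin n → ℝ | M g ≤ r} := by
  obtain ⟨K, hKpos, hKle⟩ := hK
  set r' : ℝ := max r 0 with hr'
  have hr'0 : 0 ≤ r' := le_max_right r 0
  set R : ℝ := r' * ∑ j, (K j)⁻¹ with hRdef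
  have hR0 : 0 ≤ R :=
    mul_nonneg hr'0 (Finset.sum_nonneg fun j _ => (inv_pos.mpr (hKpos j)).le)
  refine IsCompact.of_isClosed_subset (isCompact_closedBall (0 : Fin n → ℝ) R)
    (isClosed_le hM continuous_const) ?_
  intro g hg
  rw [Metric.mem_closedBall]
  rw [dist_pi_le_iff hR0]
  intro i
  rw [Real.dist_eq, show (0 : Fin n → ℝ) i = 0 from rfl, sub_zero]
  have h1 : |g i| * K i ≤ r' := (hKle g i).trans (hg.trans (le_max_left r 0))
  have h2 : |g i| ≤ r' * (K i)⁻¹ := by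
    rw [← le_div_iff₀ (hKpos i)] at h1
    rw [div_eq_mul_inv] at h1
    exact h1
  calc |g i| ≤ r' * (K i)⁻¹ := h2
    _ ≤ R := by
      rw [hRdef]
      refine mul_le_mul_of_nonneg_left ?_ hr'0
      exact Finset.single_le_sum (f := fun j => (K j)⁻¹)
        (fun j _ => (inv_pos.mpr (hKpos j)).le) (Finset.mem_univ i)

end S5

section Hard
variable {n : ℕ} {θ : ℝ} {N₀ N₁ : (Fin n → ℝ) → ℝ}

lemma single_eq_ite (i : Fin n) :
    (Pi.single i 1 : Fin n → ℝ) = fun j => if i = j then 1 else 0 := by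
  funext j
  rw [Pi.single_apply]
  exact if_congr eq_comm rfl rfl

lemma lag1 (hθ : 0 < θ) (hθ1 : θ < 1) {a b : ℝ} (ha : 0 < a) (hb : 0 < b) :
    a * ((((1-θ)*b) / (θ*a)) ^ θ) = ((1-θ)/θ) ^ θ * (a ^ (1-θ) * b ^ θ) := by
  have hθ1' : (0:ℝ) < 1 - θ := by linarith
  have e1 : ((1-θ)*b)/(θ*a) = ((1-θ)/θ) * (b/a) := by
    rw [div_mul_div_comm]
  rw [e1, Real.mul_rpow (by positivity) (by positivity), Real.div_rpow hb.le ha.le]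
  have e2 : a ^ (1-θ) = a / a ^ θ := by
    rw [Real.rpow_sub ha, Real.rpow_one]
  rw [e2]
  have hane : a ^ θ ≠ 0 := ne_of_gt (Real.rpow_pos_of_pos ha θ)
  field_simp

lemma lag2 (hθ : 0 < θ) (hθ1 : θ < 1) {a b : ℝ} (ha : 0 < a) (hb : 0 < b) :
    b * (((θ*a) / ((1-θ)*b)) ^ (1-θ)) = (θ/(1-θ)) ^ (1-θ) * (a ^ (1-θ) * b ^ θ) := by
  have hθ1' : (0:ℝ) < 1 - θ := by linarith
  have e1 : (θ*a)/((1-θ)*b) = (θ/(1-θ)) * (a/b) := by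
    rw [div_mul_div_comm]
  rw [e1, Real.mul_rpow (by positivity) (by positivity), Real.div_rpow ha.le hb.le]
  have e2 : b ^ θ = b / b ^ (1-θ) := by
    rw [eq_div_iff (ne_of_gt (Real.rpow_pos_of_pos hb (1-θ))), ← Real.rpow_add hb]
    norm_num
  rw [e2]
  have hbne : b ^ (1-θ) ≠ 0 := ne_of_gt (Real.rpow_pos_of_pos hb (1-θ))
  field_simp

lemma lagrange_id (hθ : 0 < θ) (hθ1 : θ < 1) {a b yi : ℝ} (ha : 0 < a) (hb : 0 < b) :
    a * (yi * ((((1-θ)*b) / (θ*a)) ^ θ)) + b * (yi * (((θ*a) / ((1-θ)*b)) ^ (1-θ)))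
      = (((1-θ)/θ) ^ θ + (θ/(1-θ)) ^ (1-θ)) * (a ^ (1-θ) * b ^ θ) * yi := by
  have l1 := lag1 hθ hθ1 ha hb
  have l2 := lag2 hθ hθ1 ha hb
  calc a * (yi * ((((1-θ)*b) / (θ*a)) ^ θ)) + b * (yi * (((θ*a) / ((1-θ)*b)) ^ (1-θ)))
      = (a * ((((1-θ)*b) / (θ*a)) ^ θ) + b * (((θ*a) / ((1-θ)*b)) ^ (1-θ))) * yi := by ring
    _ = _ := by rw [l1, l2]; ring

lemma lag_factor (hθ : 0 < θ) (hθ1 : θ < 1) {a b yi : ℝ} (ha : 0 < a) (hb : 0 < b)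
    (hy : 0 ≤ yi) :
    (yi * ((((1-θ)*b) / (θ*a)) ^ θ)) ^ (1-θ) * ((yi * (((θ*a) / ((1-θ)*b)) ^ (1-θ))) ^ θ)
      = yi := by
  have hθ1' : (0:ℝ) < 1 - θ := by linarith
  set R : ℝ := ((1-θ)*b)/(θ*a) with hR
  have hRpos : 0 < R := by
    rw [hR]; positivity
  have hinv : (θ*a)/((1-θ)*b) = R⁻¹ := by
    rw [hR, inv_div]
  rw [hinv]
  rw [Real.mul_rpow hy (Real.rpow_nonneg hRpos.le θ),
    Real.mul_rpow hy (Real.rpow_nonneg (inv_nonneg.mpr hRpos.le) (1-θ))]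
  have e1 : (R ^ θ) ^ (1-θ) = R ^ (θ*(1-θ)) := (Real.rpow_mul hRpos.le θ (1-θ)).symm
  have e2 : ((R⁻¹) ^ (1-θ)) ^ θ = (R ^ ((1-θ)*θ))⁻¹ := by
    rw [Real.inv_rpow hRpos.le, Real.inv_rpow (Real.rpow_nonneg hRpos.le _),
      ← Real.rpow_mul hRpos.le]
  rw [e1, e2]
  have e3 : yi ^ (1-θ) * (R ^ (θ*(1-θ))) * (yi ^ θ * (R ^ ((1-θ)*θ))⁻¹)
      = (yi ^ (1-θ) * yi ^ θ) * (R ^ (θ*(1-θ)) * (R ^ ((1-θ)*θ))⁻¹) := by ring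
  rw [e3, rpow_split hθ hθ1 hy, show θ*(1-θ) = (1-θ)*θ by ring,
    mul_inv_cancel₀ (ne_of_gt (Real.rpow_pos_of_pos hRpos _)), mul_one]

/-- The hard direction of Calderón duality, by convex separation. -/
lemma hard_ineq (hθ : 0 < θ) (hθ1 : θ < 1) (h₀ : IsLatticeNorm N₀) (h₁ : IsLatticeNorm N₁)
    {y : Fin n → ℝ} (hy : ∀ i, 0 ≤ y i) :
    calNorm θ (dualNR N₀) (dualNR N₁) y ≤ dualNR (calNorm θ N₀ N₁) y := by
  have hθ1' : (0:ℝ) < 1 - θ := by linarith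
  have hd₀ := dualNR_isLatticeNorm h₀
  have hd₁ := dualNR_isLatticeNorm h₁
  by_contra hcon
  push_neg at hcon
  set D : ℝ := dualNR (calNorm θ N₀ N₁) y with hD
  have hD0 : 0 ≤ D := dualNR_nonneg _ y
  set ε : ℝ := (calNorm θ (dualNR N₀) (dualNR N₁) y - D) / 2 with hε
  have hεpos : 0 < ε := by rw [hε]; simp only [hD]; linarith
  have hDε : D + ε < calNorm θ (dualNR N₀) (dualNR N₁) y := by rw [hε]; simp only [hD]; linarith
  have hDε0 : 0 < D + ε := by linarith
  set A : Set ((Fin n → ℝ) × (Fin n → ℝ)) :=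
    {p | (∀ i, 0 ≤ p.1 i) ∧ (∀ i, 0 ≤ p.2 i) ∧ ∀ i, y i ≤ p.1 i ^ (1-θ) * p.2 i ^ θ} with hA
  set B : Set ((Fin n → ℝ) × (Fin n → ℝ)) :=
    {g : Fin n → ℝ | dualNR N₀ g ≤ D + ε} ×ˢ {k : Fin n → ℝ | dualNR N₁ k ≤ D + ε} with hB
  -- B is convex and compact
  have ballconv : ∀ (N : (Fin n → ℝ) → ℝ), HasCoordLB N →
      Convex ℝ {g : Fin n → ℝ | dualNR N g ≤ D + ε} := by
    intro N hN g hg k hk a b ha hb hab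
    show dualNR N (a • g + b • k) ≤ D + ε
    calc dualNR N (a • g + b • k) ≤ dualNR N (a • g) + dualNR N (b • k) :=
          dualNR_add_le N hN _ _
      _ ≤ a * dualNR N g + b * dualNR N k :=
          add_le_add (dualNR_smul_le N hN ha g) (dualNR_smul_le N hN hb k)
      _ ≤ a * (D + ε) + b * (D + ε) :=
          add_le_add (mul_le_mul_of_nonneg_left hg ha) (mul_le_mul_of_nonneg_left hk hb)
      _ = D + ε := by rw [← add_mul, hab, one_mul]
  have hBconv : Convex ℝ B :=
    Convex.prod (ballconv N₀ h₀.hasCoordLB) (ballconv N₁ h₁.hasCoordLB)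
  have hBcomp : IsCompact B := by
    refine IsCompact.prod ?_ ?_
    · exact isCompact_ball_of
        (continuous_of_subadd (dualNR_add_le N₀ h₀.hasCoordLB) (dualNR_neg N₀)
          (dualNR_coord_bound h₀.hasCoordLB)) (dualNR_coordLB h₀) _
    · exact isCompact_ball_of
        (continuous_of_subadd (dualNR_add_le N₁ h₁.hasCoordLB) (dualNR_neg N₁)
          (dualNR_coord_bound h₁.hasCoordLB)) (dualNR_coordLB h₁) _
  -- A is convex and closed
  have hAconv : Convex ℝ A := by
    intro p hp q hq a b ha hb hab
    obtain ⟨hp1, hp2, hp3⟩ := hp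
    obtain ⟨hq1, hq2, hq3⟩ := hq
    have hc1 : ∀ i, (a • p + b • q).1 i = a * p.1 i + b * q.1 i := fun i => rfl
    have hc2 : ∀ i, (a • p + b • q).2 i = a * p.2 i + b * q.2 i := fun i => rfl
    refine ⟨fun i => ?_, fun i => ?_, fun i => ?_⟩
    · rw [hc1 i]
      exact add_nonneg (mul_nonneg ha (hp1 i)) (mul_nonneg hb (hq1 i))
    · rw [hc2 i]
      exact add_nonneg (mul_nonneg ha (hp2 i)) (mul_nonneg hb (hq2 i))
    · rw [hc1 i, hc2 i]
      have key := hoelder2 hθ hθ1 (mul_nonneg ha (hp1 i)) (mul_nonneg ha (hp2 i))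
        (mul_nonneg hb (hq1 i)) (mul_nonneg hb (hq2 i))
      have e1 : (a * p.1 i) ^ (1-θ) * (a * p.2 i) ^ θ = a * (p.1 i ^ (1-θ) * p.2 i ^ θ) := by
        rw [Real.mul_rpow ha (hp1 i), Real.mul_rpow ha (hp2 i)]
        calc a ^ (1-θ) * p.1 i ^ (1-θ) * (a ^ θ * p.2 i ^ θ)
            = (a ^ (1-θ) * a ^ θ) * (p.1 i ^ (1-θ) * p.2 i ^ θ) := by ring
          _ = a * (p.1 i ^ (1-θ) * p.2 i ^ θ) := by rw [rpow_split hθ hθ1 ha]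
      have e2 : (b * q.1 i) ^ (1-θ) * (b * q.2 i) ^ θ = b * (q.1 i ^ (1-θ) * q.2 i ^ θ) := by
        rw [Real.mul_rpow hb (hq1 i), Real.mul_rpow hb (hq2 i)]
        calc b ^ (1-θ) * q.1 i ^ (1-θ) * (b ^ θ * q.2 i ^ θ)
            = (b ^ (1-θ) * b ^ θ) * (q.1 i ^ (1-θ) * q.2 i ^ θ) := by ring
          _ = b * (q.1 i ^ (1-θ) * q.2 i ^ θ) := by rw [rpow_split hθ hθ1 hb]
      calc y i = a * y i + b * y i := by rw [← add_mul, hab, one_mul]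
        _ ≤ a * (p.1 i ^ (1-θ) * p.2 i ^ θ) + b * (q.1 i ^ (1-θ) * q.2 i ^ θ) :=
            add_le_add (mul_le_mul_of_nonneg_left (hp3 i) ha)
              (mul_le_mul_of_nonneg_left (hq3 i) hb)
        _ = (a * p.1 i) ^ (1-θ) * (a * p.2 i) ^ θ + (b * q.1 i) ^ (1-θ) * (b * q.2 i) ^ θ := by
            rw [e1, e2]
        _ ≤ (a * p.1 i + b * q.1 i) ^ (1-θ) * (a * p.2 i + b * q.2 i) ^ θ := key
  have hAclosed : IsClosed A := by
    have c1 : ∀ i : Fin n, Continuous fun p : (Fin n → ℝ) × (Fin n → ℝ) => p.1 i :=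
      fun i => (continuous_apply i).comp continuous_fst
    have c2 : ∀ i : Fin n, Continuous fun p : (Fin n → ℝ) × (Fin n → ℝ) => p.2 i :=
      fun i => (continuous_apply i).comp continuous_snd
    have e : A = (⋂ i, {p : (Fin n → ℝ) × (Fin n → ℝ) | 0 ≤ p.1 i}) ∩
        ((⋂ i, {p : (Fin n → ℝ) × (Fin n → ℝ) | 0 ≤ p.2 i}) ∩
          (⋂ i, {p : (Fin n → ℝ) × (Fin n → ℝ) | y i ≤ p.1 i ^ (1-θ) * p.2 i ^ θ})) := by
      ext p
      simp only [hA, Set.mem_setOf_eq, Set.mem_inter_iff, Set.mem_iInter]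
    rw [e]
    refine IsClosed.inter (isClosed_iInter fun i => isClosed_le continuous_const (c1 i))
      (IsClosed.inter (isClosed_iInter fun i => isClosed_le continuous_const (c2 i))
        (isClosed_iInter fun i => isClosed_le continuous_const ?_))
    exact ((Real.continuous_rpow_const (by linarith)).comp (c1 i)).mul
      ((Real.continuous_rpow_const hθ.le).comp (c2 i))
  -- disjointness
  have hdisj : Disjoint B A := by
    rw [Set.disjoint_left]
    rintro p hpB hpA
    obtain ⟨hp1, hp2, hp3⟩ := hpA
    have hpB1 : dualNR N₀ p.1 ≤ D + ε := hpB.1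
    have hpB2 : dualNR N₁ p.2 ≤ D + ε := hpB.2
    set w : Fin n → ℝ := fun i => p.1 i ^ (1-θ) * p.2 i ^ θ with hw
    have hmem : dualNR N₀ p.1 ^ (1-θ) * dualNR N₁ p.2 ^ θ
        ∈ calSet θ (dualNR N₀) (dualNR N₁) w := by
      refine ⟨p.1, p.2, fun i => ?_, rfl⟩
      show |w i| = _
      rw [hw]
      rw [_root_.abs_of_nonneg (mul_nonneg (Real.rpow_nonneg (hp1 i) _)
        (Real.rpow_nonneg (hp2 i) _)), _root_.abs_of_nonneg (hp1 i),
        _root_.abs_of_nonneg (hp2 i)]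
    have hcal : calNorm θ (dualNR N₀) (dualNR N₁) y ≤ D + ε := by
      calc calNorm θ (dualNR N₀) (dualNR N₁) y
          ≤ calNorm θ (dualNR N₀) (dualNR N₁) w := by
            refine calNorm_mono hθ hθ1 hd₀ hd₁ fun i => ?_
            rw [_root_.abs_of_nonneg (hy i), hw,
              _root_.abs_of_nonneg (mul_nonneg (Real.rpow_nonneg (hp1 i) _)
                (Real.rpow_nonneg (hp2 i) _))]
            exact hp3 i
        _ ≤ dualNR N₀ p.1 ^ (1-θ) * dualNR N₁ p.2 ^ θ := calNorm_le hd₀ hd₁ hmem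
        _ ≤ (D+ε) ^ (1-θ) * (D+ε) ^ θ :=
            mul_le_mul (Real.rpow_le_rpow (dualNR_nonneg N₀ p.1) hpB1 (by linarith))
              (Real.rpow_le_rpow (dualNR_nonneg N₁ p.2) hpB2 hθ.le)
              (Real.rpow_nonneg (dualNR_nonneg N₁ p.2) _)
              (Real.rpow_nonneg hDε0.le _)
        _ = D + ε := rpow_split hθ hθ1 hDε0.le
    linarith
  -- separation
  obtain ⟨f, u, v, hfB, huv, hfA⟩ :=
    _root_.geometric_hahn_banach_compact_closed hBconv hBcomp hAconv hAclosed hdisj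
  -- the functional as a pair of vectors
  set U : Fin n → ℝ := fun i => f ((Pi.single i 1 : Fin n → ℝ), 0) with hUdef
  set V : Fin n → ℝ := fun i => f (0, (Pi.single i 1 : Fin n → ℝ)) with hVdef
  have hfeq : ∀ p : (Fin n → ℝ) × (Fin n → ℝ),
      f p = ∑ i, p.1 i * U i + ∑ i, p.2 i * V i := by
    intro p
    have e0 : p = (p.1, (0 : Fin n → ℝ)) + ((0 : Fin n → ℝ), p.2) := by
      ext <;> simp
    have e1 : f p = f (p.1, 0) + f (0, p.2) := by
      conv_lhs => rw [e0]
      rw [map_add]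
    set F₀ : (Fin n → ℝ) →ₗ[ℝ] ℝ :=
      (f.toLinearMap).comp (LinearMap.inl ℝ (Fin n → ℝ) (Fin n → ℝ)) with hF₀
    set F₁ : (Fin n → ℝ) →ₗ[ℝ] ℝ :=
      (f.toLinearMap).comp (LinearMap.inr ℝ (Fin n → ℝ) (Fin n → ℝ)) with hF₁
    have e2 : f (p.1, 0) = ∑ i, p.1 i * U i := by
      have h5 : f (p.1, (0 : Fin n → ℝ)) = F₀ p.1 := rfl
      rw [h5, LinearMap.pi_apply_eq_sum_univ F₀ p.1]
      refine Finset.sum_congr rfl fun i _ => ?_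
      rw [smul_eq_mul]
      congr 1
      show F₀ (fun j => if i = j then 1 else 0) = U i
      rw [hUdef, ← single_eq_ite i]
      rfl
    have e3 : f (0, p.2) = ∑ i, p.2 i * V i := by
      have h5 : f ((0 : Fin n → ℝ), p.2) = F₁ p.2 := rfl
      rw [h5, LinearMap.pi_apply_eq_sum_univ F₁ p.2]
      refine Finset.sum_congr rfl fun i _ => ?_
      rw [smul_eq_mul]
      congr 1
      show F₁ (fun j => if i = j then 1 else 0) = V i
      rw [hVdef, ← single_eq_ite i]
      rfl
    rw [e1, e2, e3]
  -- (y, y) belongs to A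
  have hyyA : ((y, y) : (Fin n → ℝ) × (Fin n → ℝ)) ∈ A :=
    ⟨hy, hy, fun i => le_of_eq (rpow_split hθ hθ1 (hy i)).symm⟩
  -- the functional is nonnegative in each coordinate (recession directions)
  have hrec : ∀ (z : (Fin n → ℝ) × (Fin n → ℝ)),
      (∀ i, 0 ≤ z.1 i) → (∀ i, 0 ≤ z.2 i) → ∀ t : ℝ, 0 ≤ t →
      ((y, y) + t • z : (Fin n → ℝ) × (Fin n → ℝ)) ∈ A := by
    rintro z hz1 hz2 t ht
    refine ⟨fun i => ?_, fun i => ?_, fun i => ?_⟩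
    · show 0 ≤ y i + t * z.1 i
      exact add_nonneg (hy i) (mul_nonneg ht (hz1 i))
    · show 0 ≤ y i + t * z.2 i
      exact add_nonneg (hy i) (mul_nonneg ht (hz2 i))
    · show y i ≤ (y i + t * z.1 i) ^ (1-θ) * (y i + t * z.2 i) ^ θ
      calc y i = y i ^ (1-θ) * y i ^ θ := (rpow_split hθ hθ1 (hy i)).symm
        _ ≤ (y i + t * z.1 i) ^ (1-θ) * (y i + t * z.2 i) ^ θ := by
            refine mul_le_mul (Real.rpow_le_rpow (hy i) ?_ (by linarith))
              (Real.rpow_le_rpow (hy i) ?_ hθ.le) (Real.rpow_nonneg (hy i) _)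
              (Real.rpow_nonneg (add_nonneg (hy i) (mul_nonneg ht (hz1 i))) _)
            · nlinarith [mul_nonneg ht (hz1 i)]
            · nlinarith [mul_nonneg ht (hz2 i)]
  have hlin : ∀ (z : (Fin n → ℝ) × (Fin n → ℝ)) (t : ℝ),
      f ((y, y) + t • z) = f (y, y) + t * f z := by
    intro z t
    rw [map_add, f.map_smul, smul_eq_mul]
  have hfz_nonneg : ∀ (z : (Fin n → ℝ) × (Fin n → ℝ)),
      (∀ i, 0 ≤ z.1 i) → (∀ i, 0 ≤ z.2 i) → 0 ≤ f z := by
    intro z hz1 hz2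
    by_contra hneg
    push_neg at hneg
    set t : ℝ := (f (y, y) - v + 1) / (-(f z)) with ht
    have htpos : 0 < t := by
      refine div_pos ?_ (by linarith)
      have := hfA _ hyyA
      linarith
    have hmem := hrec z hz1 hz2 t htpos.le
    have := hfA _ hmem
    rw [hlin z t] at this
    have e5 : t * f z = -(f (y, y) - v + 1) := by
      calc t * f z = (f (y, y) - v + 1) * (f z / -f z) := by rw [ht]; ring
        _ = -(f (y, y) - v + 1) := by
            rw [div_neg, div_self (ne_of_lt hneg)]; ring
    rw [e5] at this
    linarith
  have hsingle0 : ∀ i j : Fin n, (0:ℝ) ≤ (Pi.single i 1 : Fin n → ℝ) j := by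
    intro i j
    rw [Pi.single_apply]
    split <;> norm_num
  have hU0 : ∀ i, 0 ≤ U i := by
    intro i
    exact hfz_nonneg ((Pi.single i 1 : Fin n → ℝ), 0) (fun j => hsingle0 i j)
      (fun j => le_refl 0)
  have hV0 : ∀ i, 0 ≤ V i := by
    intro i
    exact hfz_nonneg ((0 : Fin n → ℝ), (Pi.single i 1 : Fin n → ℝ)) (fun j => le_refl 0)
      (fun j => hsingle0 i j)
  -- Step (I): (D+ε) * (N₀ U + N₁ V) ≤ u
  have hI : (D + ε) * (N₀ U + N₁ V) ≤ u := by
    have joint : ∀ g k : Fin n → ℝ, dualNR N₀ g ≤ 1 → dualNR N₁ k ≤ 1 →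
        |∑ i, g i * U i| + |∑ i, k i * V i| ≤ u / (D + ε) := by
      intro g k hg hk
      set g' : Fin n → ℝ := if 0 ≤ ∑ i, g i * U i then g else -g with hg'
      set k' : Fin n → ℝ := if 0 ≤ ∑ i, k i * V i then k else -k with hk'
      have hg'1 : dualNR N₀ g' ≤ 1 := by
        rw [hg']
        split
        · exact hg
        · rw [dualNR_neg]; exact hg
      have hk'1 : dualNR N₁ k' ≤ 1 := by
        rw [hk']
        split
        · exact hk
        · rw [dualNR_neg]; exact hk
      have hsg : ∑ i, g' i * U i = |∑ i, g i * U i| := by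
        rw [hg']
        by_cases hc : 0 ≤ ∑ i, g i * U i
        · rw [if_pos hc, _root_.abs_of_nonneg hc]
        · rw [if_neg hc, _root_.abs_of_neg (lt_of_not_ge hc)]
          rw [← Finset.sum_neg_distrib]
          exact Finset.sum_congr rfl fun i _ => by simp
      have hsk : ∑ i, k' i * V i = |∑ i, k i * V i| := by
        rw [hk']
        by_cases hc : 0 ≤ ∑ i, k i * V i
        · rw [if_pos hc, _root_.abs_of_nonneg hc]
        · rw [if_neg hc, _root_.abs_of_neg (lt_of_not_ge hc)]
          rw [← Finset.sum_neg_distrib]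
          exact Finset.sum_congr rfl fun i _ => by simp
      have hmemB : (((D+ε) • g', (D+ε) • k') : (Fin n → ℝ) × (Fin n → ℝ)) ∈ B := by
        refine Set.mk_mem_prod ?_ ?_
        · show dualNR N₀ ((D+ε) • g') ≤ D + ε
          calc dualNR N₀ ((D+ε) • g') ≤ (D+ε) * dualNR N₀ g' :=
                dualNR_smul_le N₀ h₀.hasCoordLB hDε0.le g'
            _ ≤ (D+ε) * 1 := mul_le_mul_of_nonneg_left hg'1 hDε0.le
            _ = D + ε := mul_one _
        · show dualNR N₁ ((D+ε) • k') ≤ D + ε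
          calc dualNR N₁ ((D+ε) • k') ≤ (D+ε) * dualNR N₁ k' :=
                dualNR_smul_le N₁ h₁.hasCoordLB hDε0.le k'
            _ ≤ (D+ε) * 1 := mul_le_mul_of_nonneg_left hk'1 hDε0.le
            _ = D + ε := mul_one _
      have hlt := hfB _ hmemB
      rw [hfeq] at hlt
      have e6 : ∑ i, (((D+ε) • g', (D+ε) • k') : (Fin n → ℝ) × (Fin n → ℝ)).1 i * U i
          = (D+ε) * ∑ i, g' i * U i := by
        rw [Finset.mul_sum]
        exact Finset.sum_congr rfl fun i _ => by
          show (D+ε) * g' i * U i = (D+ε) * (g' i * U i)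
          ring
      have e7 : ∑ i, (((D+ε) • g', (D+ε) • k') : (Fin n → ℝ) × (Fin n → ℝ)).2 i * V i
          = (D+ε) * ∑ i, k' i * V i := by
        rw [Finset.mul_sum]
        exact Finset.sum_congr rfl fun i _ => by
          show (D+ε) * k' i * V i = (D+ε) * (k' i * V i)
          ring
      rw [e6, e7, hsg, hsk] at hlt
      rw [le_div_iff₀ hDε0]
      nlinarith [hlt]
    have s1 : ∀ g : Fin n → ℝ, dualNR N₀ g ≤ 1 →
        |∑ i, g i * U i| + dualNR (dualNR N₁) V ≤ u / (D + ε) := by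
      intro g hg
      have h2 : dualNR (dualNR N₁) V ≤ u / (D+ε) - |∑ i, g i * U i| := by
        refine Real.sSup_le ?_ ?_
        · rintro r ⟨k, hk, rfl⟩
          have := joint g k hg hk
          linarith
        · have := joint g 0 hg (dualNR_zero_le_one N₁)
          have e8 : |∑ i, (0 : Fin n → ℝ) i * V i| = 0 := by simp
          rw [e8] at this
          linarith
      linarith
    have s2 : dualNR (dualNR N₀) U + dualNR (dualNR N₁) V ≤ u / (D + ε) := by
      have h3 : dualNR (dualNR N₀) U ≤ u/(D+ε) - dualNR (dualNR N₁) V := by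
        refine Real.sSup_le ?_ ?_
        · rintro r ⟨g, hg, rfl⟩
          have := s1 g hg
          linarith
        · have := s1 0 (dualNR_zero_le_one N₀)
          have e9 : |∑ i, (0 : Fin n → ℝ) i * U i| = 0 := by simp
          rw [e9] at this
          linarith
      linarith
    rw [bidual_s3 h₀ U, bidual_s3 h₁ V] at s2
    have := (le_div_iff₀ hDε0).mp s2
    linarith
  -- Step (III): v ≤ κ * SS0
  set κ : ℝ := ((1-θ)/θ) ^ θ + (θ/(1-θ)) ^ (1-θ) with hκ
  have hκ0 : 0 ≤ κ := by
    rw [hκ]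
    exact add_nonneg (Real.rpow_nonneg (by positivity) _) (Real.rpow_nonneg (by positivity) _)
  set SS0 : ℝ := ∑ i, U i ^ (1-θ) * V i ^ θ * y i with hSS
  have hIII : v ≤ κ * SS0 := by
    have hbound : ∀ δ : ℝ, 0 < δ →
        v ≤ κ * ∑ i, (U i + δ) ^ (1-θ) * (V i + δ) ^ θ * y i := by
      intro δ hδ
      have hUp : ∀ i, 0 < U i + δ := fun i => by have := hU0 i; linarith
      have hVp : ∀ i, 0 < V i + δ := fun i => by have := hV0 i; linarith
      set g : Fin n → ℝ :=
        fun i => y i * ((((1-θ)*(V i + δ)) / (θ*(U i + δ))) ^ θ) with hgd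
      set k : Fin n → ℝ :=
        fun i => y i * (((θ*(U i + δ)) / ((1-θ)*(V i + δ))) ^ (1-θ)) with hkd
      have hgnn : ∀ i, 0 ≤ g i := fun i =>
        mul_nonneg (hy i) (Real.rpow_nonneg (div_nonneg
          (mul_nonneg (le_of_lt hθ1') (hVp i).le) (mul_nonneg hθ.le (hUp i).le)) _)
      have hknn : ∀ i, 0 ≤ k i := fun i =>
        mul_nonneg (hy i) (Real.rpow_nonneg (div_nonneg
          (mul_nonneg hθ.le (hUp i).le) (mul_nonneg (le_of_lt hθ1') (hVp i).le)) _)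
      have hgkA : ((g, k) : (Fin n → ℝ) × (Fin n → ℝ)) ∈ A := by
        refine ⟨hgnn, hknn, fun i => ?_⟩
        exact le_of_eq (lag_factor hθ hθ1 (hUp i) (hVp i) (hy i)).symm
      have hfgk := hfA _ hgkA
      rw [hfeq] at hfgk
      have hstep : ∑ i, ((g, k) : (Fin n → ℝ) × (Fin n → ℝ)).1 i * U i
            + ∑ i, ((g, k) : (Fin n → ℝ) × (Fin n → ℝ)).2 i * V i
          ≤ ∑ i, ((U i + δ) * g i + (V i + δ) * k i) := by
        rw [← Finset.sum_add_distrib]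
        refine Finset.sum_le_sum fun i _ => ?_
        show g i * U i + k i * V i ≤ (U i + δ) * g i + (V i + δ) * k i
        nlinarith [mul_nonneg hδ.le (hgnn i), mul_nonneg hδ.le (hknn i)]
      have hid : ∀ i, (U i + δ) * g i + (V i + δ) * k i
          = κ * ((U i + δ) ^ (1-θ) * (V i + δ) ^ θ * y i) := by
        intro i
        have := lagrange_id hθ hθ1 (yi := y i) (hUp i) (hVp i)
        rw [hgd, hkd]
        calc (U i + δ) * (y i * ((((1-θ)*(V i + δ)) / (θ*(U i + δ))) ^ θ))
              + (V i + δ) * (y i * (((θ*(U i + δ)) / ((1-θ)*(V i + δ))) ^ (1-θ)))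
            = (((1-θ)/θ) ^ θ + (θ/(1-θ)) ^ (1-θ))
                * ((U i + δ) ^ (1-θ) * (V i + δ) ^ θ) * y i := this
          _ = κ * ((U i + δ) ^ (1-θ) * (V i + δ) ^ θ * y i) := by rw [hκ]; ring
      calc v ≤ ∑ i, ((g, k) : (Fin n → ℝ) × (Fin n → ℝ)).1 i * U i
            + ∑ i, ((g, k) : (Fin n → ℝ) × (Fin n → ℝ)).2 i * V i := hfgk.le
        _ ≤ ∑ i, ((U i + δ) * g i + (V i + δ) * k i) := hstep
        _ = κ * ∑ i, (U i + δ) ^ (1-θ) * (V i + δ) ^ θ * y i := by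
            rw [Finset.mul_sum]
            exact Finset.sum_congr rfl fun i _ => hid i
    have hcont : Continuous
        (fun δ : ℝ => κ * ∑ i, (U i + δ) ^ (1-θ) * (V i + δ) ^ θ * y i) := by
      refine continuous_const.mul (continuous_finset_sum _ fun i _ => ?_)
      refine Continuous.mul (Continuous.mul ?_ ?_) continuous_const
      · exact (Real.continuous_rpow_const (by linarith)).comp
          (continuous_const.add continuous_id)
      · exact (Real.continuous_rpow_const hθ.le).comp (continuous_const.add continuous_id)
    have htend : Filter.Tendsto
        (fun δ : ℝ => κ * ∑ i, (U i + δ) ^ (1-θ) * (V i + δ) ^ θ * y i)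
        (nhdsWithin 0 (Set.Ioi 0)) (nhds (κ * SS0)) := by
      have h0 : κ * ∑ i, (U i + (0:ℝ)) ^ (1-θ) * (V i + (0:ℝ)) ^ θ * y i = κ * SS0 := by
        rw [hSS]
        congr 1
        exact Finset.sum_congr rfl fun i _ => by rw [add_zero, add_zero]
      have h1 := hcont.continuousAt (x := (0:ℝ))
      rw [ContinuousAt, h0] at h1
      exact h1.mono_left nhdsWithin_le_nhds
    exact ge_of_tendsto htend
      (Filter.eventually_of_mem self_mem_nhdsWithin fun δ hδ => hbound δ hδ)
  -- Step (IV): SS0 ≤ D * (N₀ U ^ (1-θ) * N₁ V ^ θ)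
  have hIV : SS0 ≤ D * (N₀ U ^ (1-θ) * N₁ V ^ θ) := by
    rcases (h₀.nonneg U).eq_or_lt with ha0 | ha
    · have hUz : U = 0 := h₀.definite U ha0.symm
      have hz : SS0 = 0 := by
        rw [hSS]
        refine Finset.sum_eq_zero fun i _ => ?_
        rw [hUz]
        show (0:ℝ) ^ (1-θ) * V i ^ θ * y i = 0
        rw [Real.zero_rpow (by linarith : (1:ℝ) - θ ≠ 0), zero_mul, zero_mul]
      rw [hz]
      exact mul_nonneg hD0 (mul_nonneg (Real.rpow_nonneg (h₀.nonneg U) _)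
        (Real.rpow_nonneg (h₁.nonneg V) _))
    rcases (h₁.nonneg V).eq_or_lt with hb0 | hb
    · have hVz : V = 0 := h₁.definite V hb0.symm
      have hz : SS0 = 0 := by
        rw [hSS]
        refine Finset.sum_eq_zero fun i _ => ?_
        rw [hVz]
        show U i ^ (1-θ) * (0:ℝ) ^ θ * y i = 0
        rw [Real.zero_rpow (ne_of_gt hθ), mul_zero, zero_mul]
      rw [hz]
      exact mul_nonneg hD0 (mul_nonneg (Real.rpow_nonneg (h₀.nonneg U) _)
        (Real.rpow_nonneg (h₁.nonneg V) _))
    set x : Fin n → ℝ := fun i => (U i / N₀ U) ^ (1-θ) * (V i / N₁ V) ^ θ with hx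
    have hxmem : (1:ℝ) ∈ calSet θ N₀ N₁ x := by
      refine ⟨(N₀ U)⁻¹ • U, (N₁ V)⁻¹ • V, fun i => ?_, ?_⟩
      · show |x i| = |(N₀ U)⁻¹ * U i| ^ (1-θ) * |(N₁ V)⁻¹ * V i| ^ θ
        rw [hx]
        rw [_root_.abs_of_nonneg (mul_nonneg
          (Real.rpow_nonneg (div_nonneg (hU0 i) (h₀.nonneg U)) _)
          (Real.rpow_nonneg (div_nonneg (hV0 i) (h₁.nonneg V)) _))]
        rw [_root_.abs_of_nonneg (mul_nonneg (inv_nonneg.mpr (h₀.nonneg U)) (hU0 i)),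
          _root_.abs_of_nonneg (mul_nonneg (inv_nonneg.mpr (h₁.nonneg V)) (hV0 i))]
        rw [inv_mul_eq_div, inv_mul_eq_div]
      · rw [h₀.homog, h₁.homog, abs_inv, abs_inv, _root_.abs_of_pos ha, _root_.abs_of_pos hb,
          inv_mul_cancel₀ (ne_of_gt ha), inv_mul_cancel₀ (ne_of_gt hb),
          Real.one_rpow, Real.one_rpow, mul_one]
    have hcx : calNorm θ N₀ N₁ x ≤ 1 := calNorm_le h₀ h₁ hxmem
    have hpair : |∑ i, x i * y i| ≤ D :=
      le_dualNR (calNorm_coordLB hθ hθ1 h₀ h₁) y hcx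
    have hSSeq : SS0 = (N₀ U ^ (1-θ) * N₁ V ^ θ) * ∑ i, x i * y i := by
      rw [hSS, Finset.mul_sum]
      refine Finset.sum_congr rfl fun i _ => ?_
      simp only [hx]
      rw [Real.div_rpow (hU0 i) (h₀.nonneg U), Real.div_rpow (hV0 i) (h₁.nonneg V)]
      have hane : N₀ U ^ (1-θ) ≠ 0 := ne_of_gt (Real.rpow_pos_of_pos ha _)
      have hbne : N₁ V ^ θ ≠ 0 := ne_of_gt (Real.rpow_pos_of_pos hb _)
      field_simp
    rw [hSSeq]
    have hprodnn : 0 ≤ N₀ U ^ (1-θ) * N₁ V ^ θ :=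
      mul_nonneg (Real.rpow_nonneg (h₀.nonneg U) _) (Real.rpow_nonneg (h₁.nonneg V) _)
    calc (N₀ U ^ (1-θ) * N₁ V ^ θ) * ∑ i, x i * y i
        ≤ (N₀ U ^ (1-θ) * N₁ V ^ θ) * |∑ i, x i * y i| :=
          mul_le_mul_of_nonneg_left (le_abs_self _) hprodnn
      _ ≤ (N₀ U ^ (1-θ) * N₁ V ^ θ) * D := mul_le_mul_of_nonneg_left hpair hprodnn
      _ = D * (N₀ U ^ (1-θ) * N₁ V ^ θ) := mul_comm _ _
  -- conclusion
  have hfinal : κ * SS0 ≤ D * (N₀ U + N₁ V) := by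
    calc κ * SS0 ≤ κ * (D * (N₀ U ^ (1-θ) * N₁ V ^ θ)) := mul_le_mul_of_nonneg_left hIV hκ0
      _ = D * (κ * (N₀ U ^ (1-θ) * N₁ V ^ θ)) := by ring
      _ ≤ D * (N₀ U + N₁ V) := by
          refine mul_le_mul_of_nonneg_left ?_ hD0
          rw [hκ]
          exact kappa_amgm hθ hθ1 (h₀.nonneg U) (h₁.nonneg V)
  have ht0 : 0 ≤ N₀ U + N₁ V := add_nonneg (h₀.nonneg U) (h₁.nonneg V)
  nlinarith [hI, huv, hIII, hfinal, mul_nonneg hεpos.le ht0]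


end Hard

section Easy
variable {n : ℕ} {θ : ℝ} {N₀ N₁ : (Fin n → ℝ) → ℝ}

lemma pairing_le_prod (hθ : 0 < θ) (hθ1 : θ < 1)
    (h₀ : IsLatticeNorm N₀) (h₁ : IsLatticeNorm N₁)
    {x y u' v' g k : Fin n → ℝ}
    (hx : ∀ i, |x i| = |u' i| ^ (1-θ) * |v' i| ^ θ)
    (hyf : ∀ i, |y i| = |g i| ^ (1-θ) * |k i| ^ θ) :
    |∑ i, x i * y i| ≤ (N₀ u' ^ (1-θ) * N₁ v' ^ θ)
      * (dualNR N₀ g ^ (1-θ) * dualNR N₁ k ^ θ) := by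
  have step1 : |∑ i, x i * y i| ≤ ∑ i, |x i| * |y i| := by
    calc |∑ i, x i * y i| ≤ ∑ i, |x i * y i| := Finset.abs_sum_le_sum_abs _ _
      _ = ∑ i, |x i| * |y i| := Finset.sum_congr rfl fun i _ => abs_mul _ _
  have step2 : ∑ i, |x i| * |y i|
      = ∑ i, (|u' i| * |g i|) ^ (1-θ) * (|v' i| * |k i|) ^ θ := by
    refine Finset.sum_congr rfl fun i _ => ?_
    rw [hx i, hyf i, Real.mul_rpow (abs_nonneg _) (abs_nonneg _),
      Real.mul_rpow (abs_nonneg _) (abs_nonneg _)]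
    ring
  have step3 : ∑ i, (|u' i| * |g i|) ^ (1-θ) * (|v' i| * |k i|) ^ θ
      ≤ (∑ i, |u' i| * |g i|) ^ (1-θ) * (∑ i, |v' i| * |k i|) ^ θ :=
    hoelder_sum hθ hθ1 _ _ (fun i => mul_nonneg (abs_nonneg _) (abs_nonneg _))
      (fun i => mul_nonneg (abs_nonneg _) (abs_nonneg _))
  have step4 : (∑ i, |u' i| * |g i|) ^ (1-θ) * (∑ i, |v' i| * |k i|) ^ θ
      ≤ (N₀ u' * dualNR N₀ g) ^ (1-θ) * (N₁ v' * dualNR N₁ k) ^ θ := by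
    refine mul_le_mul
      (Real.rpow_le_rpow (Finset.sum_nonneg fun i _ =>
        mul_nonneg (abs_nonneg _) (abs_nonneg _)) (abs_pairing_le h₀ u' g) (by linarith))
      (Real.rpow_le_rpow (Finset.sum_nonneg fun i _ =>
        mul_nonneg (abs_nonneg _) (abs_nonneg _)) (abs_pairing_le h₁ v' k) hθ.le)
      (Real.rpow_nonneg (Finset.sum_nonneg fun i _ =>
        mul_nonneg (abs_nonneg _) (abs_nonneg _)) _)
      (Real.rpow_nonneg (mul_nonneg (h₀.nonneg u') (dualNR_nonneg N₀ g)) _)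
  have step5 : (N₀ u' * dualNR N₀ g) ^ (1-θ) * (N₁ v' * dualNR N₁ k) ^ θ
      = (N₀ u' ^ (1-θ) * N₁ v' ^ θ) * (dualNR N₀ g ^ (1-θ) * dualNR N₁ k ^ θ) := by
    rw [Real.mul_rpow (h₀.nonneg u') (dualNR_nonneg N₀ g),
      Real.mul_rpow (h₁.nonneg v') (dualNR_nonneg N₁ k)]
    ring
  calc |∑ i, x i * y i| ≤ ∑ i, |x i| * |y i| := step1
    _ = ∑ i, (|u' i| * |g i|) ^ (1-θ) * (|v' i| * |k i|) ^ θ := step2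
    _ ≤ (∑ i, |u' i| * |g i|) ^ (1-θ) * (∑ i, |v' i| * |k i|) ^ θ := step3
    _ ≤ (N₀ u' * dualNR N₀ g) ^ (1-θ) * (N₁ v' * dualNR N₁ k) ^ θ := step4
    _ = _ := step5

lemma easy_ineq (hθ : 0 < θ) (hθ1 : θ < 1)
    (h₀ : IsLatticeNorm N₀) (h₁ : IsLatticeNorm N₁) (y : Fin n → ℝ) :
    dualNR (calNorm θ N₀ N₁) y ≤ calNorm θ (dualNR N₀) (dualNR N₁) y := by
  refine Real.sSup_le ?_
    (calNorm_nonneg (dualNR_isLatticeNorm h₀) (dualNR_isLatticeNorm h₁) y)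
  rintro r ⟨x, hx, rfl⟩
  refine le_csInf (calSet_nonempty hθ hθ1 y) ?_
  rintro W ⟨g, k, hyfac, rfl⟩
  have claim : ∀ c ∈ calSet θ N₀ N₁ x,
      |∑ i, x i * y i| ≤ c * (dualNR N₀ g ^ (1-θ) * dualNR N₁ k ^ θ) := by
    rintro c ⟨u', v', hxfac, rfl⟩
    exact pairing_le_prod hθ hθ1 h₀ h₁ hxfac hyfac
  have hVnn : 0 ≤ dualNR N₀ g ^ (1-θ) * dualNR N₁ k ^ θ :=
    mul_nonneg (Real.rpow_nonneg (dualNR_nonneg N₀ g) _)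
      (Real.rpow_nonneg (dualNR_nonneg N₁ k) _)
  rcases hVnn.eq_or_lt with hV0 | hV0
  · obtain ⟨c, hc⟩ := calSet_nonempty hθ hθ1 x
    have h5 := claim c hc
    rw [← hV0, mul_zero] at h5
    rw [← hV0]
    exact h5
  · have h1 : |∑ i, x i * y i| / (dualNR N₀ g ^ (1-θ) * dualNR N₁ k ^ θ)
        ≤ calNorm θ N₀ N₁ x := by
      refine le_csInf (calSet_nonempty hθ hθ1 x) fun c hc => ?_
      rw [div_le_iff₀ hV0]
      exact claim c hc
    have h2 := h1.trans hx
    rwa [div_le_one hV0] at h2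

lemma dualNR_abs {M : (Fin n → ℝ) → ℝ}
    (hM : ∀ x x' : Fin n → ℝ, (∀ i, |x i| = |x' i|) → M x ≤ M x') (y : Fin n → ℝ) :
    dualNR M (fun i => |y i|) = dualNR M y := by
  set s : Fin n → ℝ := fun i => if y i < 0 then -1 else 1 with hs
  have hs1 : ∀ i, ∀ c : ℝ, |s i * c| = |c| := by
    intro i c
    rw [hs]
    dsimp only
    split <;> simp
  have hsy : ∀ i, s i * y i = |y i| := by
    intro i
    rw [hs]
    dsimp only
    by_cases h : y i < 0
    · rw [if_pos h, _root_.abs_of_neg h]; ring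
    · rw [if_neg h, _root_.abs_of_nonneg (not_lt.mp h), one_mul]
  have hsay : ∀ i, s i * |y i| = y i := by
    intro i
    rw [hs]
    dsimp only
    by_cases h : y i < 0
    · rw [if_pos h, _root_.abs_of_neg h]; ring
    · rw [if_neg h, _root_.abs_of_nonneg (not_lt.mp h), one_mul]
  have e : dualSet M (fun i => |y i|) = dualSet M y := by
    ext r
    constructor
    · rintro ⟨x, hx, rfl⟩
      refine ⟨fun i => s i * x i, (hM _ x fun i => hs1 i (x i)).trans hx, ?_⟩
      congr 1
      refine Finset.sum_congr rfl fun i _ => ?_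
      calc x i * |y i| = x i * (s i * y i) := by rw [hsy i]
        _ = s i * x i * y i := by ring
    · rintro ⟨x, hx, rfl⟩
      refine ⟨fun i => s i * x i, (hM _ x fun i => hs1 i (x i)).trans hx, ?_⟩
      congr 1
      refine Finset.sum_congr rfl fun i _ => ?_
      calc x i * y i = x i * (s i * |y i|) := by rw [hsay i]
        _ = s i * x i * |y i| := by ring
  show sSup (dualSet M (fun i => |y i|)) = sSup (dualSet M y)
  rw [e]

theorem statement3' {n : ℕ} (θ : ℝ) (hθ : 0 < θ) (hθ1 : θ < 1)
    (N₀ N₁ : (Fin n → ℝ) → ℝ) (h₀ : IsLatticeNorm N₀) (h₁ : IsLatticeNorm N₁)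
    (y : Fin n → ℝ) :
    dualNR (calNorm θ N₀ N₁) y = calNorm θ (dualNR N₀) (dualNR N₁) y := by
  have hd₀ := dualNR_isLatticeNorm h₀
  have hd₁ := dualNR_isLatticeNorm h₁
  have habs_cal : calNorm θ (dualNR N₀) (dualNR N₁) y
      = calNorm θ (dualNR N₀) (dualNR N₁) (fun i => |y i|) :=
    le_antisymm
      (calNorm_mono hθ hθ1 hd₀ hd₁ fun i => le_of_eq (_root_.abs_abs (y i)).symm)
      (calNorm_mono hθ hθ1 hd₀ hd₁ fun i => le_of_eq (_root_.abs_abs (y i)))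
  have habs_dual : dualNR (calNorm θ N₀ N₁) (fun i => |y i|) = dualNR (calNorm θ N₀ N₁) y :=
    dualNR_abs (fun x x' h => calNorm_mono hθ hθ1 h₀ h₁ fun i => le_of_eq (h i)) y
  rw [habs_cal, ← habs_dual]
  exact le_antisymm (easy_ineq hθ hθ1 h₀ h₁ _)
    (hard_ineq hθ hθ1 h₀ h₁ fun i => abs_nonneg (y i))

end Easy
end MoreAux

/-- `(X₀^{1-θ}X₁^θ)' = (X₀')^{1-θ}(X₁')^θ` isometrically. -/
theorem statement3 {n : ℕ} (θ : ℝ) (hθ : 0 < θ) (hθ1 : θ < 1)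
    (N₀ N₁ : (Fin n → ℝ) → ℝ) (h₀ : IsLatticeNorm N₀) (h₁ : IsLatticeNorm N₁)
    (y : Fin n → ℝ) :
    dualNR (calNorm θ N₀ N₁) y = calNorm θ (dualNR N₀) (dualNR N₁) y := by
  have hd₀ := dualNR_isLatticeNorm h₀
  have hd₁ := dualNR_isLatticeNorm h₁
  have habs_cal : calNorm θ (dualNR N₀) (dualNR N₁) y
      = calNorm θ (dualNR N₀) (dualNR N₁) (fun i => |y i|) :=
    le_antisymm
      (calNorm_mono hθ hθ1 hd₀ hd₁ fun i => le_of_eq (_root_.abs_abs (y i)).symm)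
      (calNorm_mono hθ hθ1 hd₀ hd₁ fun i => le_of_eq (_root_.abs_abs (y i)))
  have habs_dual : dualNR (calNorm θ N₀ N₁) (fun i => |y i|) = dualNR (calNorm θ N₀ N₁) y :=
    dualNR_abs (fun x x' h => calNorm_mono hθ hθ1 h₀ h₁ fun i => le_of_eq (h i)) y
  rw [habs_cal, ← habs_dual]
  exact le_antisymm (easy_ineq hθ hθ1 h₀ h₁ _)
    (hard_ineq hθ hθ1 h₀ h₁ fun i => abs_nonneg (y i))

end Paper
end
end

section
/- Let X₀, X₁ be n-dimensional Banach lattices, 0 < r < ∞, with M^(max(1,r))(X₀) = M^(max(1,r))(X₁) = 1, and let 0 < θ < 1. Then the r-th power of the Calderón product equals the Calderón product of the r-th powers isometrically: (X₀^{1-θ}X₁^{θ})^r = (X₀^r)^{1-θ}(X₁^r)^{θ}. -/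
open Complex MeasureTheory Finset

noncomputable section

namespace Paper

variable {Ω : Type*} [MeasurableSpace Ω] {μ : Measure Ω} {K : Type*} [RCLike K]

/-- Key exponent identity: `(a^s)^(1-θ) * (b^s)^θ = (a^(1-θ) * b^θ)^s` for nonneg `a, b`. -/
lemma aux_rpow_mix (θ s a b : ℝ) (ha : 0 ≤ a) (hb : 0 ≤ b) :
    (a ^ s) ^ (1 - θ) * (b ^ s) ^ θ = (a ^ (1 - θ) * b ^ θ) ^ s := by
  rw [← Real.rpow_mul ha, ← Real.rpow_mul hb,
      Real.mul_rpow (Real.rpow_nonneg ha _) (Real.rpow_nonneg hb _),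
      ← Real.rpow_mul ha, ← Real.rpow_mul hb, mul_comm s (1 - θ), mul_comm s θ]

/-- `sInf` commutes with `rpow` on sets of nonnegative reals. -/
lemma aux_sInf_rpow {s : Set ℝ} (hs : s.Nonempty) (h0 : ∀ c ∈ s, 0 ≤ c)
    {r : ℝ} (hr : 0 < r) :
    sInf s ^ r = sInf ((fun c => c ^ r) '' s) := by
  have hbdd : BddBelow s := ⟨0, h0⟩
  have ha : 0 ≤ sInf s := Real.sInf_nonneg h0
  have h0' : ∀ c ∈ (fun c => c ^ r) '' s, 0 ≤ c := by
    rintro c ⟨d, hd, rfl⟩; exact Real.rpow_nonneg (h0 d hd) r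
  have hb : 0 ≤ sInf ((fun c => c ^ r) '' s) := Real.sInf_nonneg h0'
  apply le_antisymm
  · apply le_csInf (hs.image _)
    rintro c ⟨d, hd, rfl⟩
    exact Real.rpow_le_rpow ha (csInf_le hbdd hd) hr.le
  · have key : sInf ((fun c => c ^ r) '' s) ^ (1 / r) ≤ sInf s := by
      apply le_csInf hs
      intro d hd
      have h1 : sInf ((fun c => c ^ r) '' s) ≤ d ^ r := csInf_le ⟨0, h0'⟩ ⟨d, hd, rfl⟩
      calc sInf ((fun c => c ^ r) '' s) ^ (1 / r) ≤ (d ^ r) ^ (1 / r) :=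
            Real.rpow_le_rpow hb h1 (by positivity)
        _ = d := by
            rw [← Real.rpow_mul (h0 d hd), mul_one_div_cancel hr.ne', Real.rpow_one]
    calc sInf ((fun c => c ^ r) '' s)
        = (sInf ((fun c => c ^ r) '' s) ^ (1 / r)) ^ r := by
          rw [← Real.rpow_mul hb, one_div_mul_cancel hr.ne', Real.rpow_one]
      _ ≤ sInf s ^ r := Real.rpow_le_rpow (Real.rpow_nonneg hb _) key hr.le

/-- `(X₀^{1-θ}X₁^θ)^r = (X₀^r)^{1-θ}(X₁^r)^θ` isometrically,
provided the `max(1,r)`-convexity constants of `X₀` and `X₁` equal `1`. -/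
theorem statement4 {n : ℕ} (r : ℝ) (hr : 0 < r) (θ : ℝ) (hθ : 0 < θ) (hθ1 : θ < 1)
    (N₀ N₁ : (Fin n → ℝ) → ℝ) (h₀ : IsLatticeNorm N₀) (h₁ : IsLatticeNorm N₁)
    (hc₀ : ConvexWith (max 1 r) 1 N₀) (hc₁ : ConvexWith (max 1 r) 1 N₁)
    (x : Fin n → ℝ) :
    powNorm r (calNorm θ N₀ N₁) x = calNorm θ (powNorm r N₀) (powNorm r N₁) x := by
  have habs : ∀ (N : (Fin n → ℝ) → ℝ), IsLatticeNorm N → ∀ g : Fin n → ℝ,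
      N (fun i => |g i|) = N g := by
    intro N hN g
    exact le_antisymm (hN.2.2.2.2 _ _ (fun i => by simp)) (hN.2.2.2.2 _ _ (fun i => by simp))
  set f : Fin n → ℝ := fun i => |x i| ^ (1 / r) with hf
  have hfnn : ∀ i, 0 ≤ f i := fun i => Real.rpow_nonneg (abs_nonneg _) _
  set A : Set ℝ := {c : ℝ | ∃ g h : Fin n → ℝ, (∀ i, |f i| = |g i| ^ (1 - θ) * |h i| ^ θ) ∧
    c = N₀ g ^ (1 - θ) * N₁ h ^ θ} with hA
  set B : Set ℝ := {c : ℝ | ∃ g h : Fin n → ℝ, (∀ i, |x i| = |g i| ^ (1 - θ) * |h i| ^ θ) ∧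
    c = powNorm r N₀ g ^ (1 - θ) * powNorm r N₁ h ^ θ} with hB
  have hAne : A.Nonempty := by
    refine ⟨N₀ f ^ (1 - θ) * N₁ f ^ θ, f, f, fun i => ?_, rfl⟩
    rw [show |f i| ^ (1 - θ) * |f i| ^ θ = |f i| ^ ((1 - θ) + θ) from
      (Real.rpow_add' (abs_nonneg _) (by norm_num)).symm]
    norm_num
  have hAnn : ∀ c ∈ A, 0 ≤ c := by
    rintro c ⟨g, h, _, rfl⟩
    exact mul_nonneg (Real.rpow_nonneg (h₀.1 g) _) (Real.rpow_nonneg (h₁.1 h) _)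
  have himg : B = (fun c => c ^ r) '' A := by
    apply Set.Subset.antisymm
    · rintro c ⟨g, h, hgh, rfl⟩
      refine ⟨N₀ (fun i => |g i| ^ (1 / r)) ^ (1 - θ) * N₁ (fun i => |h i| ^ (1 / r)) ^ θ,
        ⟨fun i => |g i| ^ (1 / r), fun i => |h i| ^ (1 / r), fun i => ?_, rfl⟩, ?_⟩
      · beta_reduce
        rw [_root_.abs_of_nonneg (hfnn i), _root_.abs_of_nonneg (Real.rpow_nonneg (abs_nonneg _) _),
          _root_.abs_of_nonneg (Real.rpow_nonneg (abs_nonneg _) _), hf]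
        rw [aux_rpow_mix θ (1 / r) _ _ (abs_nonneg (g i)) (abs_nonneg (h i)), ← hgh i]
      · exact (aux_rpow_mix θ r _ _ (h₀.1 _) (h₁.1 _)).symm
    · rintro c ⟨d, ⟨g, h, hgh, rfl⟩, rfl⟩
      refine ⟨fun i => |g i| ^ r, fun i => |h i| ^ r, fun i => ?_, ?_⟩
      · beta_reduce
        rw [_root_.abs_of_nonneg (Real.rpow_nonneg (abs_nonneg _) _),
          _root_.abs_of_nonneg (Real.rpow_nonneg (abs_nonneg _) _),
          aux_rpow_mix θ r _ _ (abs_nonneg (g i)) (abs_nonneg (h i)), ← hgh i,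
          _root_.abs_of_nonneg (hfnn i), hf, ← Real.rpow_mul (abs_nonneg _),
          one_div_mul_cancel hr.ne', Real.rpow_one]
      · have hg : powNorm r N₀ (fun i => |g i| ^ r) = N₀ g ^ r := by
          unfold powNorm
          congr 1
          rw [← habs N₀ h₀ g]
          congr 1
          funext i
          beta_reduce
          rw [_root_.abs_of_nonneg (Real.rpow_nonneg (abs_nonneg _) _),
            ← Real.rpow_mul (abs_nonneg _), mul_one_div_cancel hr.ne', Real.rpow_one]
        have hh : powNorm r N₁ (fun i => |h i| ^ r) = N₁ h ^ r := by
          unfold powNorm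
          congr 1
          rw [← habs N₁ h₁ h]
          congr 1
          funext i
          beta_reduce
          rw [_root_.abs_of_nonneg (Real.rpow_nonneg (abs_nonneg _) _),
            ← Real.rpow_mul (abs_nonneg _), mul_one_div_cancel hr.ne', Real.rpow_one]
        rw [hg, hh, aux_rpow_mix θ r _ _ (h₀.1 _) (h₁.1 _)]
  show (calNorm θ N₀ N₁ fun i => |x i| ^ (1 / r)) ^ r = calNorm θ (powNorm r N₀) (powNorm r N₁) x
  unfold calNorm
  rw [show {c : ℝ | ∃ g h : Fin n → ℝ, (∀ i, |x i| = |g i| ^ (1 - θ) * |h i| ^ θ) ∧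
    c = powNorm r N₀ g ^ (1 - θ) * powNorm r N₁ h ^ θ} = B from hB.symm, himg]
  exact aux_sInf_rpow hAne hAnn hr

end Paper
end
end

section
/- Let X₀, X₁ be Banach function spaces over the same σ-finite measure space, both r-convex for some 1 ≤ r < ∞, and let 0 < θ < 1. Then the Calderón product X₀^{1-θ}X₁^{θ} is r-convex with M^(r)(X₀^{1-θ}X₁^{θ}) ≤ M^(r)(X₀)^{1-θ}·M^(r)(X₁)^{θ}. -/
open Complex MeasureTheory Finset

noncomputable section

namespace Paper

variable {Ω : Type*} [MeasurableSpace Ω] {μ : Measure Ω} {K : Type*} [RCLike K]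

/-- The Calderón product membership for Banach function spaces. -/
def BFS.calMem {Ω' : Type*} [MeasurableSpace Ω'] {μ' : Measure Ω'} {K' : Type*}
    [RCLike K'] (X₀ X₁ : BFS Ω' μ' K') (θ : ℝ) (f : Ω' → K') : Prop :=
  AEStronglyMeasurable f μ' ∧ ∃ g h, X₀.mem g ∧ X₁.mem h ∧
    ∀ᵐ ω ∂μ', ‖f ω‖ = ‖g ω‖ ^ (1 - θ) * ‖h ω‖ ^ θ

/-- The Calderón product norm for Banach function spaces. -/
def BFS.calNrm {Ω' : Type*} [MeasurableSpace Ω'] {μ' : Measure Ω'} {K' : Type*}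
    [RCLike K'] (X₀ X₁ : BFS Ω' μ' K') (θ : ℝ) (f : Ω' → K') : ℝ :=
  sInf {c : ℝ | ∃ g h, X₀.mem g ∧ X₁.mem h ∧
    (∀ᵐ ω ∂μ', ‖f ω‖ = ‖g ω‖ ^ (1 - θ) * ‖h ω‖ ^ θ) ∧
    c = X₀.nrm g ^ (1 - θ) * X₁.nrm h ^ θ}

lemma BFS.nrm_zero' {Ω₂ : Type*} [MeasurableSpace Ω₂] {μ₂ : Measure Ω₂} {K₂ : Type*}
    [RCLike K₂] (X : BFS Ω₂ μ₂ K₂) : X.nrm 0 = 0 := by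
  have h := X.nrm_smul 0 0
  simpa using h

/-- Hölder-type inequality: `∑ aᵢ^{1-θ} bᵢ^θ ≤ (∑ aᵢ)^{1-θ} (∑ bᵢ)^θ`. -/
lemma holder_sum {ι : Type*} (s : Finset ι) (a b : ι → ℝ) (ha : ∀ i, 0 ≤ a i)
    (hb : ∀ i, 0 ≤ b i) {θ : ℝ} (hθ : 0 < θ) (hθ1 : θ < 1) :
    ∑ i ∈ s, a i ^ (1 - θ) * b i ^ θ ≤
      (∑ i ∈ s, a i) ^ (1 - θ) * (∑ i ∈ s, b i) ^ θ := by
  have hs : (0:ℝ) < 1 - θ := by linarith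
  have hpq : Real.HolderConjugate (1/(1-θ)) (1/θ) := by
    constructor
    · simp only [one_div, inv_inv, inv_one]; ring
    · exact div_pos one_pos hs
    · exact div_pos one_pos hθ
  have key := Real.inner_le_Lp_mul_Lq_of_nonneg s
    (f := fun i => a i ^ (1-θ)) (g := fun i => b i ^ θ) hpq
    (fun i _ => Real.rpow_nonneg (ha i) _) (fun i _ => Real.rpow_nonneg (hb i) _)
  have e1 : (∑ i ∈ s, (a i ^ (1-θ)) ^ (1/(1-θ))) = ∑ i ∈ s, a i :=
    Finset.sum_congr rfl fun i _ => by
      rw [one_div, Real.rpow_rpow_inv (ha i) hs.ne']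
  have e2 : (∑ i ∈ s, (b i ^ θ) ^ (1/θ)) = ∑ i ∈ s, b i :=
    Finset.sum_congr rfl fun i _ => by
      rw [one_div, Real.rpow_rpow_inv (hb i) hθ.ne']
  rw [e1, e2, one_div_one_div, one_div_one_div] at key
  exact key

/-- If `μ ≠ 0`, any `r`-convexity constant is at least `1`. -/
lemma one_le_rconvex_const {Ω₂ : Type*} [MeasurableSpace Ω₂] {μ₂ : Measure Ω₂}
    [SigmaFinite μ₂] (hμ : μ₂ ≠ 0) (X : BFS Ω₂ μ₂ ℝ)
    {r C : ℝ} (hr : 1 ≤ r) (h : X.RConvexWith r C) : 1 ≤ C := by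
  have hr0 : (0:ℝ) < r := lt_of_lt_of_le one_pos hr
  obtain ⟨n, hn⟩ : ∃ n, 0 < μ₂ (spanningSets μ₂ n) := by
    by_contra hc
    push_neg at hc
    have huniv : μ₂ Set.univ = 0 := by
      rw [← iUnion_spanningSets μ₂]
      exact measure_iUnion_null fun n => le_antisymm (hc n) zero_le
    exact hμ (Measure.measure_univ_eq_zero.mp huniv)
  set s := spanningSets μ₂ n with hsdef
  set ind : Ω₂ → ℝ := s.indicator (fun _ => 1) with hind
  have hmem : X.mem ind :=
    X.mem_indicator s (measurableSet_spanningSets μ₂ n) (measure_spanningSets_lt_top μ₂ n)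
  have hindnn : ∀ ω, 0 ≤ ind ω := fun ω =>
    Set.indicator_nonneg (fun _ _ => zero_le_one) ω
  have hF1 : (fun ω => ((((∑ _i : Fin 1, ‖ind ω‖ ^ r) ^ (1 / r) : ℝ) : ℝ))) = ind := by
    funext ω
    simp only [Fin.sum_univ_one]
    rw [one_div, Real.rpow_rpow_inv (norm_nonneg _) hr0.ne']
    exact Real.norm_of_nonneg (hindnn ω)
  have h2 : X.nrm ind ≤ C * X.nrm ind := by
    have hcv : X.nrm (fun ω => (((∑ _i : Fin 1, ‖ind ω‖ ^ r) ^ (1 / r) : ℝ))) ≤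
        C * (∑ _i : Fin 1, X.nrm ind ^ r) ^ (1 / r) :=
      (h 1 (fun _ => ind) (fun _ => hmem)).2
    rw [hF1] at hcv
    calc X.nrm ind ≤ C * (∑ _i : Fin 1, X.nrm ind ^ r) ^ (1 / r) := hcv
      _ = C * X.nrm ind := by
          rw [Fin.sum_univ_one, one_div, Real.rpow_rpow_inv (X.nrm_nonneg ind) hr0.ne']
  have hpos : 0 < X.nrm ind := by
    rcases eq_or_lt_of_le (X.nrm_nonneg ind) with hz | hp
    · exfalso
      have hz0 := X.nrm_eq_zero ind hmem hz.symm
      have h0 : μ₂ {ω | ind ω ≠ 0} = 0 := by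
        rw [Filter.EventuallyEq, ae_iff] at hz0
        simpa using hz0
      have hsub : s ⊆ {ω | ind ω ≠ 0} := fun ω hω => by
        have h1 : ind ω = 1 := by rw [hind]; exact Set.indicator_of_mem hω _
        simp [h1]
      exact absurd (measure_mono_null hsub h0) hn.ne'
    · exact hp
  have := h2
  nlinarith [hpos]

/-- Normalization of a Calderón representation. -/
lemma normalize_rep {Ω₂ : Type*} [MeasurableSpace Ω₂] {μ₂ : Measure Ω₂}
    (X₀ X₁ : BFS Ω₂ μ₂ ℝ) {θ : ℝ} (hθ : 0 < θ) (hθ1 : θ < 1) (f g h : Ω₂ → ℝ)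
    (hg : X₀.mem g) (hh : X₁.mem h)
    (heq : ∀ᵐ ω ∂μ₂, ‖f ω‖ = ‖g ω‖ ^ (1 - θ) * ‖h ω‖ ^ θ)
    {d : ℝ} (hd : 0 < d) (hbd : X₀.nrm g ^ (1 - θ) * X₁.nrm h ^ θ ≤ d) :
    ∃ g' h', X₀.mem g' ∧ X₁.mem h' ∧
      (∀ᵐ ω ∂μ₂, ‖f ω‖ = ‖g' ω‖ ^ (1 - θ) * ‖h' ω‖ ^ θ) ∧
      X₀.nrm g' ≤ d ∧ X₁.nrm h' ≤ d := by
  have hs : (0:ℝ) < 1 - θ := by linarith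
  rcases eq_or_lt_of_le (X₀.nrm_nonneg g) with ha | ha
  · refine ⟨0, 0, X₀.mem_zero, X₁.mem_zero, ?_,
      by rw [X₀.nrm_zero']; exact hd.le, by rw [X₁.nrm_zero']; exact hd.le⟩
    have hg0 : g =ᵐ[μ₂] 0 := X₀.nrm_eq_zero g hg ha.symm
    filter_upwards [heq, hg0] with ω h1 h2
    rw [h1, h2]
    simp [Real.zero_rpow hs.ne', Real.zero_rpow hθ.ne']
  rcases eq_or_lt_of_le (X₁.nrm_nonneg h) with hb | hb
  · refine ⟨0, 0, X₀.mem_zero, X₁.mem_zero, ?_,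
      by rw [X₀.nrm_zero']; exact hd.le, by rw [X₁.nrm_zero']; exact hd.le⟩
    have hh0 : h =ᵐ[μ₂] 0 := X₁.nrm_eq_zero h hh hb.symm
    filter_upwards [heq, hh0] with ω h1 h2
    rw [h1, h2]
    simp [Real.zero_rpow hs.ne', Real.zero_rpow hθ.ne']
  · set a := X₀.nrm g with hadef
    set b := X₁.nrm h with hbdef
    set N := a ^ (1-θ) * b ^ θ with hN
    have hNpos : 0 < N := mul_pos (Real.rpow_pos_of_pos ha _) (Real.rpow_pos_of_pos hb _)
    refine ⟨(N/a) • g, (N/b) • h, X₀.mem_smul _ _ hg, X₁.mem_smul _ _ hh, ?_, ?_, ?_⟩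
    · have hfac : (N/a) ^ (1-θ) * (N/b) ^ θ = 1 := by
        rw [Real.div_rpow hNpos.le ha.le, Real.div_rpow hNpos.le hb.le, div_mul_div_comm,
            ← Real.rpow_add hNpos]
        have he : (1-θ) + θ = 1 := by ring
        rw [he, Real.rpow_one, ← hN, div_self hNpos.ne']
      have hNa : (0:ℝ) ≤ N/a := by positivity
      have hNb : (0:ℝ) ≤ N/b := by positivity
      filter_upwards [heq] with ω h1
      rw [h1]
      simp only [Pi.smul_apply, smul_eq_mul, norm_mul, Real.norm_eq_abs,
        _root_.abs_of_nonneg hNa, _root_.abs_of_nonneg hNb]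
      rw [Real.mul_rpow hNa (abs_nonneg _), Real.mul_rpow hNb (abs_nonneg _)]
      rw [show ∀ x y : ℝ, (N/a)^(1-θ) * x * ((N/b)^θ * y) =
        ((N/a)^(1-θ)*(N/b)^θ) * (x*y) from fun x y => by ring, hfac, one_mul]
    · rw [X₀.nrm_smul, Real.norm_of_nonneg (by positivity : (0:ℝ) ≤ N/a), ← hadef,
        div_mul_cancel₀ _ ha.ne']
      exact hbd
    · rw [X₁.nrm_smul, Real.norm_of_nonneg (by positivity : (0:ℝ) ≤ N/b), ← hbdef,
        div_mul_cancel₀ _ hb.ne']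
      exact hbd

/-- The core construction: from representations of the `f i`, build a representation
of the `ℓ^r`-sum and estimate its Calderón norm. -/
lemma core_construction {Ω₂ : Type*} [MeasurableSpace Ω₂] {μ₂ : Measure Ω₂}
    (X₀ X₁ : BFS Ω₂ μ₂ ℝ) {r : ℝ} (hr : 1 ≤ r) {C₀ C₁ : ℝ}
    (h₀ : X₀.RConvexWith r C₀) (h₁ : X₁.RConvexWith r C₁)
    {θ : ℝ} (hθ : 0 < θ) (hθ1 : θ < 1)
    {m : ℕ} (f g h : Fin m → Ω₂ → ℝ)
    (hfm : ∀ i, AEStronglyMeasurable (f i) μ₂)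
    (hg : ∀ i, X₀.mem (g i)) (hh : ∀ i, X₁.mem (h i))
    (heq : ∀ i, ∀ᵐ ω ∂μ₂, ‖f i ω‖ = ‖g i ω‖ ^ (1 - θ) * ‖h i ω‖ ^ θ) :
    BFS.calMem X₀ X₁ θ (fun ω => (∑ i, ‖f i ω‖ ^ r) ^ (1 / r)) ∧
    BFS.calNrm X₀ X₁ θ (fun ω => (∑ i, ‖f i ω‖ ^ r) ^ (1 / r)) ≤
      (C₀ * (∑ i, X₀.nrm (g i) ^ r) ^ (1 / r)) ^ (1 - θ) *
      (C₁ * (∑ i, X₁.nrm (h i) ^ r) ^ (1 / r)) ^ θ := by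
  have hr0 : (0:ℝ) < r := lt_of_lt_of_le one_pos hr
  have hs : (0:ℝ) < 1 - θ := by linarith
  set F : Ω₂ → ℝ := fun ω => (∑ i, ‖f i ω‖ ^ r) ^ (1 / r) with hFdef
  set G : Ω₂ → ℝ := fun ω => (∑ i, ‖g i ω‖ ^ r) ^ (1 / r) with hGdef
  set H : Ω₂ → ℝ := fun ω => (∑ i, ‖h i ω‖ ^ r) ^ (1 / r) with hHdef
  set H' : Ω₂ → ℝ := fun ω => F ω ^ (1/θ) * G ω ^ (-((1-θ)/θ)) with hH'def
  have hFnn : ∀ ω, 0 ≤ F ω := fun ω =>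
    Real.rpow_nonneg (Finset.sum_nonneg fun i _ => Real.rpow_nonneg (norm_nonneg _) _) _
  have hGnn : ∀ ω, 0 ≤ G ω := fun ω =>
    Real.rpow_nonneg (Finset.sum_nonneg fun i _ => Real.rpow_nonneg (norm_nonneg _) _) _
  have hHnn : ∀ ω, 0 ≤ H ω := fun ω =>
    Real.rpow_nonneg (Finset.sum_nonneg fun i _ => Real.rpow_nonneg (norm_nonneg _) _) _
  have hH'nn : ∀ ω, 0 ≤ H' ω := fun ω =>
    mul_nonneg (Real.rpow_nonneg (hFnn ω) _) (Real.rpow_nonneg (hGnn ω) _)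
  -- measurability
  have hmf : AEMeasurable F μ₂ := by
    apply AEMeasurable.pow _ aemeasurable_const
    exact Finset.aemeasurable_fun_sum _ fun i _ =>
      ((hfm i).norm.aemeasurable).pow aemeasurable_const
  have hmG : AEMeasurable G μ₂ := by
    apply AEMeasurable.pow _ aemeasurable_const
    exact Finset.aemeasurable_fun_sum _ fun i _ =>
      ((X₀.mem_meas _ (hg i)).norm.aemeasurable).pow aemeasurable_const
  have hmH' : AEMeasurable H' μ₂ :=
    (hmf.pow aemeasurable_const).mul (hmG.pow aemeasurable_const)
  have hFsm : AEStronglyMeasurable F μ₂ := aestronglyMeasurable_iff_aemeasurable.mpr hmf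
  have hH'sm : AEStronglyMeasurable H' μ₂ := aestronglyMeasurable_iff_aemeasurable.mpr hmH'
  have hae : ∀ᵐ ω ∂μ₂, ∀ i, ‖f i ω‖ = ‖g i ω‖ ^ (1-θ) * ‖h i ω‖ ^ θ := ae_all_iff.mpr heq
  -- the key pointwise facts
  have key : ∀ᵐ ω ∂μ₂, (‖F ω‖ = ‖G ω‖ ^ (1-θ) * ‖H' ω‖ ^ θ) ∧ ‖H' ω‖ ≤ ‖H ω‖ := by
    filter_upwards [hae] with ω hω
    rw [Real.norm_of_nonneg (hFnn ω), Real.norm_of_nonneg (hGnn ω),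
      Real.norm_of_nonneg (hH'nn ω), Real.norm_of_nonneg (hHnn ω)]
    have hA : (0:ℝ) ≤ ∑ i, ‖g i ω‖ ^ r :=
      Finset.sum_nonneg fun i _ => Real.rpow_nonneg (norm_nonneg _) _
    have hB : (0:ℝ) ≤ ∑ i, ‖h i ω‖ ^ r :=
      Finset.sum_nonneg fun i _ => Real.rpow_nonneg (norm_nonneg _) _
    have key1 : F ω ≤ G ω ^ (1-θ) * H ω ^ θ := by
      have e : ∀ i, ‖f i ω‖ ^ r = (‖g i ω‖ ^ r) ^ (1-θ) * (‖h i ω‖ ^ r) ^ θ := fun i => by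
        rw [hω i, Real.mul_rpow (Real.rpow_nonneg (norm_nonneg _) _)
              (Real.rpow_nonneg (norm_nonneg _) _),
            ← Real.rpow_mul (norm_nonneg _), ← Real.rpow_mul (norm_nonneg _),
            mul_comm (1-θ) r, mul_comm θ r,
            Real.rpow_mul (norm_nonneg _), Real.rpow_mul (norm_nonneg _)]
      have hsum : (∑ i, ‖f i ω‖ ^ r) ≤
          (∑ i, ‖g i ω‖ ^ r) ^ (1-θ) * (∑ i, ‖h i ω‖ ^ r) ^ θ := by
        calc (∑ i, ‖f i ω‖ ^ r)
            = ∑ i, (‖g i ω‖ ^ r) ^ (1-θ) * (‖h i ω‖ ^ r) ^ θ :=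
              Finset.sum_congr rfl fun i _ => e i
          _ ≤ _ := holder_sum Finset.univ _ _
              (fun i => Real.rpow_nonneg (norm_nonneg _) _)
              (fun i => Real.rpow_nonneg (norm_nonneg _) _) hθ hθ1
      calc F ω ≤ ((∑ i, ‖g i ω‖ ^ r) ^ (1-θ) * (∑ i, ‖h i ω‖ ^ r) ^ θ) ^ (1/r) :=
            Real.rpow_le_rpow (Finset.sum_nonneg fun i _ =>
              Real.rpow_nonneg (norm_nonneg _) _) hsum (by positivity)
        _ = G ω ^ (1-θ) * H ω ^ θ := by
            rw [Real.mul_rpow (Real.rpow_nonneg hA _) (Real.rpow_nonneg hB _),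
                ← Real.rpow_mul hA, ← Real.rpow_mul hB, mul_comm (1-θ) (1/r),
                mul_comm θ (1/r), Real.rpow_mul hA, Real.rpow_mul hB]
    by_cases hGz : G ω = 0
    · have hF0 : F ω = 0 := by
        refine le_antisymm ?_ (hFnn ω)
        rw [hGz, Real.zero_rpow hs.ne', zero_mul] at key1
        exact key1
      have hH'0 : H' ω = 0 := by
        show F ω ^ (1/θ) * G ω ^ (-((1-θ)/θ)) = 0
        rw [hGz, Real.zero_rpow (by
          intro hc
          have : (1-θ)/θ = 0 := by linarith [neg_eq_zero.mp hc]
          exact hs.ne' (by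
            have := div_eq_zero_iff.mp this
            rcases this with h1 | h1
            · exact h1
            · exact absurd h1 hθ.ne')), mul_zero]
      constructor
      · rw [hF0, hH'0, hGz, Real.zero_rpow hs.ne', zero_mul]
      · rw [hH'0]; exact hHnn ω
    · have hGpos : 0 < G ω := (hGnn ω).lt_of_ne (Ne.symm hGz)
      constructor
      · show F ω = G ω ^ (1-θ) * (F ω ^ (1/θ) * G ω ^ (-((1-θ)/θ))) ^ θ
        rw [Real.mul_rpow (Real.rpow_nonneg (hFnn ω) _) (Real.rpow_nonneg (hGnn ω) _),
            ← Real.rpow_mul (hFnn ω), one_div, inv_mul_cancel₀ hθ.ne', Real.rpow_one,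
            ← Real.rpow_mul (hGnn ω)]
        have he : -((1-θ)/θ) * θ = -(1-θ) := by field_simp
        rw [he, mul_left_comm, ← Real.rpow_add hGpos, add_neg_cancel, Real.rpow_zero, mul_one]
      · show F ω ^ (1/θ) * G ω ^ (-((1-θ)/θ)) ≤ H ω
        have step : F ω ^ (1/θ) ≤ (G ω ^ (1-θ) * H ω ^ θ) ^ (1/θ) :=
          Real.rpow_le_rpow (hFnn ω) key1 (by positivity)
        have e2 : (G ω ^ (1-θ) * H ω ^ θ) ^ (1/θ) = G ω ^ ((1-θ)/θ) * H ω := by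
          rw [Real.mul_rpow (Real.rpow_nonneg (hGnn ω) _) (Real.rpow_nonneg (hHnn ω) _),
              ← Real.rpow_mul (hGnn ω), ← Real.rpow_mul (hHnn ω), mul_one_div, mul_one_div,
              div_self hθ.ne', Real.rpow_one]
        calc F ω ^ (1/θ) * G ω ^ (-((1-θ)/θ))
            ≤ (G ω ^ (1-θ) * H ω ^ θ) ^ (1/θ) * G ω ^ (-((1-θ)/θ)) :=
              mul_le_mul_of_nonneg_right step (Real.rpow_nonneg (hGnn ω) _)
          _ = H ω := by
              rw [e2, mul_comm (G ω ^ ((1-θ)/θ)) (H ω), mul_assoc,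
                ← Real.rpow_add hGpos, add_neg_cancel, Real.rpow_zero, mul_one]
  -- memberships and norm bounds from r-convexity
  obtain ⟨hGmem, hGle⟩ := h₀ m g hg
  obtain ⟨hHmem, hHle⟩ := h₁ m h hh
  have hGmem' : X₀.mem G := hGmem
  have hHmem' : X₁.mem H := hHmem
  have hGle' : X₀.nrm G ≤ C₀ * (∑ i, X₀.nrm (g i) ^ r) ^ (1/r) := hGle
  have hHle' : X₁.nrm H ≤ C₁ * (∑ i, X₁.nrm (h i) ^ r) ^ (1/r) := hHle
  obtain ⟨hH'mem, hH'le⟩ :=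
    X₁.ideal H' H hH'sm hHmem' (key.mono fun ω hω => hω.2)
  have hmemF : BFS.calMem X₀ X₁ θ F :=
    ⟨hFsm, G, H', hGmem', hH'mem, key.mono fun ω hω => hω.1⟩
  refine ⟨hmemF, ?_⟩
  have hle1 : BFS.calNrm X₀ X₁ θ F ≤ X₀.nrm G ^ (1-θ) * X₁.nrm H' ^ θ := by
    apply csInf_le
    · refine ⟨0, ?_⟩
      rintro x ⟨g', h', _, _, _, rfl⟩
      exact mul_nonneg (Real.rpow_nonneg (X₀.nrm_nonneg _) _)
        (Real.rpow_nonneg (X₁.nrm_nonneg _) _)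
    · exact ⟨G, H', hGmem', hH'mem, key.mono fun ω hω => hω.1, rfl⟩
  calc BFS.calNrm X₀ X₁ θ F ≤ X₀.nrm G ^ (1-θ) * X₁.nrm H' ^ θ := hle1
    _ ≤ (C₀ * (∑ i, X₀.nrm (g i) ^ r) ^ (1/r)) ^ (1-θ) *
        (C₁ * (∑ i, X₁.nrm (h i) ^ r) ^ (1/r)) ^ θ := by
      apply mul_le_mul
      · exact Real.rpow_le_rpow (X₀.nrm_nonneg _) hGle' hs.le
      · exact Real.rpow_le_rpow (X₁.nrm_nonneg _) (le_trans hH'le hHle') hθ.le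
      · exact Real.rpow_nonneg (X₁.nrm_nonneg _) _
      · exact Real.rpow_nonneg (le_trans (X₀.nrm_nonneg _) hGle') _

/-- the Calderón product of two `r`-convex Banach function spaces
is `r`-convex with constant `≤ M^(r)(X₀)^{1-θ}·M^(r)(X₁)^θ`. -/
theorem statement5 {Ω' : Type*} [MeasurableSpace Ω'] (μ : Measure Ω')
    [SigmaFinite μ] (hμc : μ.IsComplete) (X₀ X₁ : BFS Ω' μ ℝ)
    (r : ℝ) (hr : 1 ≤ r) (C₀ C₁ : ℝ)
    (h₀ : X₀.RConvexWith r C₀) (h₁ : X₁.RConvexWith r C₁)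
    (θ : ℝ) (hθ : 0 < θ) (hθ1 : θ < 1)
    (m : ℕ) (f : Fin m → Ω' → ℝ) (hf : ∀ i, BFS.calMem X₀ X₁ θ (f i)) :
    BFS.calMem X₀ X₁ θ (fun ω => (∑ i, ‖f i ω‖ ^ r) ^ (1 / r)) ∧
    BFS.calNrm X₀ X₁ θ (fun ω => (∑ i, ‖f i ω‖ ^ r) ^ (1 / r)) ≤
      (C₀ ^ (1 - θ) * C₁ ^ θ) * (∑ i, BFS.calNrm X₀ X₁ θ (f i) ^ r) ^ (1 / r) := by
  have hr0 : (0:ℝ) < r := lt_of_lt_of_le one_pos hr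
  have hs : (0:ℝ) < 1 - θ := by linarith
  by_cases hμ0 : μ = 0
  · -- trivial measure: everything is zero
    subst hμ0
    have hae0 : ∀ (p : Ω' → Prop), ∀ᵐ ω ∂(0 : Measure Ω'), p ω := by
      intro p; simp [ae_iff]
    have hmem0 : BFS.calMem X₀ X₁ θ (fun ω => (∑ i, ‖f i ω‖ ^ r) ^ (1 / r)) :=
      ⟨aestronglyMeasurable_zero_measure _, 0, 0, X₀.mem_zero, X₁.mem_zero, hae0 _⟩
    refine ⟨hmem0, ?_⟩
    have hzero_mem : ∀ q : Ω' → ℝ,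
        (0:ℝ) ∈ {c : ℝ | ∃ g h, X₀.mem g ∧ X₁.mem h ∧
          (∀ᵐ ω ∂(0 : Measure Ω'), ‖q ω‖ = ‖g ω‖ ^ (1 - θ) * ‖h ω‖ ^ θ) ∧
          c = X₀.nrm g ^ (1 - θ) * X₁.nrm h ^ θ} := by
      intro q
      refine ⟨0, 0, X₀.mem_zero, X₁.mem_zero, hae0 _, ?_⟩
      rw [X₀.nrm_zero', X₁.nrm_zero', Real.zero_rpow hs.ne', zero_mul]
    have hbdd : ∀ q : Ω' → ℝ, BddBelow {c : ℝ | ∃ g h, X₀.mem g ∧ X₁.mem h ∧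
        (∀ᵐ ω ∂(0 : Measure Ω'), ‖q ω‖ = ‖g ω‖ ^ (1 - θ) * ‖h ω‖ ^ θ) ∧
        c = X₀.nrm g ^ (1 - θ) * X₁.nrm h ^ θ} := by
      intro q
      refine ⟨0, ?_⟩
      rintro x ⟨g', h', _, _, _, rfl⟩
      exact mul_nonneg (Real.rpow_nonneg (X₀.nrm_nonneg _) _)
        (Real.rpow_nonneg (X₁.nrm_nonneg _) _)
    have hcz : ∀ i, BFS.calNrm X₀ X₁ θ (f i) = 0 := by
      intro i
      refine le_antisymm (csInf_le (hbdd _) (hzero_mem _)) (Real.sInf_nonneg ?_)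
      rintro x ⟨g', h', _, _, _, rfl⟩
      exact mul_nonneg (Real.rpow_nonneg (X₀.nrm_nonneg _) _)
        (Real.rpow_nonneg (X₁.nrm_nonneg _) _)
    have hRHS : (C₀ ^ (1 - θ) * C₁ ^ θ) *
        (∑ i, BFS.calNrm X₀ X₁ θ (f i) ^ r) ^ (1 / r) = 0 := by
      have : (∑ i : Fin m, BFS.calNrm X₀ X₁ θ (f i) ^ r) = 0 := by
        apply Finset.sum_eq_zero
        intro i _
        rw [hcz i, Real.zero_rpow hr0.ne']
      rw [this, Real.zero_rpow (by positivity : (1:ℝ)/r ≠ 0), mul_zero]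
    rw [hRHS]
    exact csInf_le (hbdd _) (hzero_mem _)
  · -- the interesting case
    have hC₀ : 1 ≤ C₀ := one_le_rconvex_const hμ0 X₀ hr h₀
    have hC₁ : 1 ≤ C₁ := one_le_rconvex_const hμ0 X₁ hr h₁
    have hC₀0 : (0:ℝ) < C₀ := lt_of_lt_of_le one_pos hC₀
    have hC₁0 : (0:ℝ) < C₁ := lt_of_lt_of_le one_pos hC₁
    set c : Fin m → ℝ := fun i => BFS.calNrm X₀ X₁ θ (f i) with hcdef
    have hSne : ∀ i, Set.Nonempty {x : ℝ | ∃ g h, X₀.mem g ∧ X₁.mem h ∧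
        (∀ᵐ ω ∂μ, ‖f i ω‖ = ‖g ω‖ ^ (1 - θ) * ‖h ω‖ ^ θ) ∧
        x = X₀.nrm g ^ (1 - θ) * X₁.nrm h ^ θ} := by
      intro i
      obtain ⟨_, g', h', hg', hh', heq'⟩ := hf i
      exact ⟨_, g', h', hg', hh', heq', rfl⟩
    have hc0 : ∀ i, 0 ≤ c i := by
      intro i
      apply Real.sInf_nonneg
      rintro x ⟨g', h', _, _, _, rfl⟩
      exact mul_nonneg (Real.rpow_nonneg (X₀.nrm_nonneg _) _)
        (Real.rpow_nonneg (X₁.nrm_nonneg _) _)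
    -- membership: use any representation
    have hmemF : BFS.calMem X₀ X₁ θ (fun ω => (∑ i, ‖f i ω‖ ^ r) ^ (1 / r)) := by
      choose g' h' hg' hh' heq' using fun i => (hf i).2
      exact (core_construction X₀ X₁ hr h₀ h₁ hθ hθ1 f g' h'
        (fun i => (hf i).1) hg' hh' heq').1
    refine ⟨hmemF, ?_⟩
    -- norm bound via ε-approximation
    apply le_of_forall_pos_le_add
    intro δ hδ
    set Cc : ℝ := C₀ ^ (1-θ) * C₁ ^ θ with hCcdef
    have hCcpos : 0 < Cc :=
      mul_pos (Real.rpow_pos_of_pos hC₀0 _) (Real.rpow_pos_of_pos hC₁0 _)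
    set Km : ℝ := Cc * (m:ℝ) ^ (1/r) with hKmdef
    have hKm0 : 0 ≤ Km := mul_nonneg hCcpos.le (Real.rpow_nonneg (Nat.cast_nonneg m) _)
    set ε : ℝ := δ / (Km + 1) with hεdef
    have hεpos : 0 < ε := div_pos hδ (by linarith)
    -- normalized representations
    have hrep : ∀ i, ∃ g h, X₀.mem g ∧ X₁.mem h ∧
        (∀ᵐ ω ∂μ, ‖f i ω‖ = ‖g ω‖ ^ (1 - θ) * ‖h ω‖ ^ θ) ∧
        X₀.nrm g ≤ c i + ε ∧ X₁.nrm h ≤ c i + ε := by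
      intro i
      obtain ⟨x, hxS, hxlt⟩ := Real.lt_sInf_add_pos (hSne i) hεpos
      obtain ⟨g', h', hg', hh', heq', rfl⟩ := hxS
      exact normalize_rep X₀ X₁ hθ hθ1 (f i) g' h' hg' hh' heq'
        (add_pos_of_nonneg_of_pos (hc0 i) hεpos) hxlt.le
    choose g' h' hg' hh' heq' hgn hhn using hrep
    have hcore := core_construction X₀ X₁ hr h₀ h₁ hθ hθ1 f g' h'
      (fun i => (hf i).1) hg' hh' heq'
    set D : ℝ := (∑ i, (c i + ε) ^ r) ^ (1/r) with hDdef
    have hD0 : 0 ≤ D := Real.rpow_nonneg (Finset.sum_nonneg fun i _ =>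
      Real.rpow_nonneg (add_nonneg (hc0 i) hεpos.le) _) _
    have hDg : (∑ i, X₀.nrm (g' i) ^ r) ^ (1/r) ≤ D :=
      Real.rpow_le_rpow (Finset.sum_nonneg fun i _ =>
          Real.rpow_nonneg (X₀.nrm_nonneg _) _)
        (Finset.sum_le_sum fun i _ =>
          Real.rpow_le_rpow (X₀.nrm_nonneg _) (hgn i) hr0.le) (by positivity)
    have hDh : (∑ i, X₁.nrm (h' i) ^ r) ^ (1/r) ≤ D :=
      Real.rpow_le_rpow (Finset.sum_nonneg fun i _ =>
          Real.rpow_nonneg (X₁.nrm_nonneg _) _)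
        (Finset.sum_le_sum fun i _ =>
          Real.rpow_le_rpow (X₁.nrm_nonneg _) (hhn i) hr0.le) (by positivity)
    have hsum_g0 : (0:ℝ) ≤ (∑ i, X₀.nrm (g' i) ^ r) ^ (1/r) :=
      Real.rpow_nonneg (Finset.sum_nonneg fun i _ =>
        Real.rpow_nonneg (X₀.nrm_nonneg _) _) _
    have hsum_h0 : (0:ℝ) ≤ (∑ i, X₁.nrm (h' i) ^ r) ^ (1/r) :=
      Real.rpow_nonneg (Finset.sum_nonneg fun i _ =>
        Real.rpow_nonneg (X₁.nrm_nonneg _) _) _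
    have step : BFS.calNrm X₀ X₁ θ (fun ω => (∑ i, ‖f i ω‖ ^ r) ^ (1 / r)) ≤ Cc * D := by
      calc BFS.calNrm X₀ X₁ θ (fun ω => (∑ i, ‖f i ω‖ ^ r) ^ (1 / r))
          ≤ (C₀ * (∑ i, X₀.nrm (g' i) ^ r) ^ (1/r)) ^ (1-θ) *
            (C₁ * (∑ i, X₁.nrm (h' i) ^ r) ^ (1/r)) ^ θ := hcore.2
        _ ≤ (C₀ * D) ^ (1-θ) * (C₁ * D) ^ θ := by
            apply mul_le_mul
            · exact Real.rpow_le_rpow (mul_nonneg hC₀0.le hsum_g0)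
                (mul_le_mul_of_nonneg_left hDg hC₀0.le) hs.le
            · exact Real.rpow_le_rpow (mul_nonneg hC₁0.le hsum_h0)
                (mul_le_mul_of_nonneg_left hDh hC₁0.le) hθ.le
            · exact Real.rpow_nonneg (mul_nonneg hC₁0.le hsum_h0) _
            · exact Real.rpow_nonneg (mul_nonneg hC₀0.le hD0) _
        _ = Cc * D := by
            rw [Real.mul_rpow hC₀0.le hD0, Real.mul_rpow hC₁0.le hD0]
            rw [show C₀^(1-θ)*D^(1-θ)*(C₁^θ*D^θ) = C₀^(1-θ)*C₁^θ*(D^(1-θ)*D^θ) from by ring]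
            rw [← Real.rpow_add' hD0 (by norm_num : (1-θ)+θ ≠ 0)]
            have he : (1-θ) + θ = 1 := by ring
            rw [he, Real.rpow_one, hCcdef]
    have hMink : D ≤ (∑ i, c i ^ r) ^ (1/r) + ε * (m:ℝ)^(1/r) := by
      have e1 : (∑ i, |c i + ε| ^ r) = ∑ i, (c i + ε) ^ r :=
        Finset.sum_congr rfl fun i _ => by
          rw [_root_.abs_of_nonneg (add_nonneg (hc0 i) hεpos.le)]
      have e2 : (∑ i : Fin m, |c i| ^ r) = ∑ i, c i ^ r :=
        Finset.sum_congr rfl fun i _ => by rw [_root_.abs_of_nonneg (hc0 i)]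
      have e3 : ((∑ _i : Fin m, |ε| ^ r) : ℝ) ^ (1/r) = ε * (m:ℝ)^(1/r) := by
        rw [_root_.abs_of_nonneg hεpos.le, Finset.sum_const, Finset.card_univ, Fintype.card_fin,
            nsmul_eq_mul, Real.mul_rpow (Nat.cast_nonneg m) (Real.rpow_nonneg hεpos.le _),
            one_div, Real.rpow_rpow_inv hεpos.le hr0.ne', mul_comm]
      calc D = (∑ i, |c i + ε| ^ r) ^ (1/r) := by rw [e1]
        _ ≤ (∑ i : Fin m, |c i| ^ r) ^ (1/r) + (∑ _i : Fin m, |ε| ^ r) ^ (1/r) :=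
            Real.Lp_add_le Finset.univ c (fun _ => ε) hr
        _ = (∑ i, c i ^ r) ^ (1/r) + ε * (m:ℝ)^(1/r) := by rw [e2, e3]
    have hKε : Cc * (ε * (m:ℝ)^(1/r)) ≤ δ := by
      have hKm : Cc * (ε * (m:ℝ)^(1/r)) = Km * ε := by rw [hKmdef]; ring
      rw [hKm, hεdef]
      rw [div_eq_mul_inv]
      have hpos : (0:ℝ) < Km + 1 := by linarith
      rw [← mul_assoc, mul_comm Km δ, mul_assoc]
      calc δ * (Km * (Km+1)⁻¹) ≤ δ * 1 := by
            apply mul_le_mul_of_nonneg_left _ hδ.le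
            rw [← div_eq_mul_inv, div_le_one hpos]
            linarith
        _ = δ := mul_one δ
    calc BFS.calNrm X₀ X₁ θ (fun ω => (∑ i, ‖f i ω‖ ^ r) ^ (1 / r))
        ≤ Cc * D := step
      _ ≤ Cc * ((∑ i, c i ^ r) ^ (1/r) + ε * (m:ℝ)^(1/r)) :=
          mul_le_mul_of_nonneg_left hMink hCcpos.le
      _ = Cc * (∑ i, c i ^ r) ^ (1/r) + Cc * (ε * (m:ℝ)^(1/r)) := by ring
      _ ≤ (C₀ ^ (1 - θ) * C₁ ^ θ) * (∑ i, BFS.calNrm X₀ X₁ θ (f i) ^ r) ^ (1 / r) + δ := by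
          rw [hCcdef]
          exact add_le_add_right hKε _

end Paper
end
end
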